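/- arXiv:1507.07333 — 5 statements merged into one kernel-verified Lean document; each statement's English description precedes it below -/
import Mathlib

section
/- Let (𝒞′, 𝒞, 𝒞″, i^*, i_*, i^!, j_!, j^*, j_*) be a recollement of triangulated categories. Then the following are equivalent: (i) the recollement is splitting; (ii) i^! ≅ i^*; (iii) j_* ≅ j_!; (iv) there is an equivalence of recollements (Id_{𝒞′}, F, Id_{𝒞″}) from (𝒞′, 𝒞, 𝒞″) to the product recollement (𝒞′, 𝒞′ × 𝒞″, 𝒞″). -/
/-!
STATEMENT 10: Let (𝒞′, 𝒞, 𝒞″, i^*, i_*, i^!, j_!, j^*, j_*) be a recollement of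
triangulated categories. Then the following are equivalent: (i) the recollement is
splitting; (ii) i^! ≅ i^*; (iii) j_* ≅ j_!; (iv) there is an equivalence of recollements
(Id_{𝒞′}, F, Id_{𝒞″}) from (𝒞′, 𝒞, 𝒞″) to the product recollement (𝒞′, 𝒞′ × 𝒞″, 𝒞″).
-/
open CategoryTheory CategoryTheory.Limits CategoryTheory.Pretriangulated

section TriangulatedPreliminaries

universe v v' v'' u u' u''

variable {C : Type u} {C' : Type u'} {C'' : Type u''}
  [Category.{v} C] [Category.{v'} C'] [Category.{v''} C'']
  [HasShift C ℤ] [HasShift C' ℤ] [HasShift C'' ℤ]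
  [Preadditive C] [Preadditive C'] [Preadditive C'']
  [HasZeroObject C] [HasZeroObject C'] [HasZeroObject C'']
  [∀ n : ℤ, (shiftFunctor C n).Additive] [∀ n : ℤ, (shiftFunctor C' n).Additive]
  [∀ n : ℤ, (shiftFunctor C'' n).Additive]
  [Pretriangulated C] [Pretriangulated C'] [Pretriangulated C'']

/-- A functor between pretriangulated categories is a triangle functor if it admits a
commutation structure with the shifts for which it preserves distinguished triangles. -/
def IsTriangleFunctor (F : C ⥤ C') : Prop :=
  ∃ c : F.CommShift ℤ, @Functor.IsTriangulated _ _ _ _ _ _ F c _ _ _ _ _ _ _ _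

/-- The kernel of a functor: the class of objects sent to a zero object. -/
def kerSet (F : C ⥤ C') : Set C := { X | IsZero (F.obj X) }

/-- A left recollement `(𝒞', 𝒞, 𝒞'', i^*, i_*, j_!, j^*)`: there are adjoint pairs
`(i^*, i_*)` and `(j_!, j^*)`, the functors `i_*`, `j_!` are fully faithful, `j^* i_* = 0`,
and every object `X` fits in a distinguished triangle
`j_! j^* X ⟶ X ⟶ i_* i^* X ⟶ (j_! j^* X)[1]` whose morphisms into and out of `X` are the
counit and the unit of the adjunctions. -/
def IsLeftRecollement (iStar : C ⥤ C') (iPush : C' ⥤ C)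
    (jShriek : C'' ⥤ C) (jStar : C ⥤ C'') : Prop :=
  ∃ (adjI : iStar ⊣ iPush) (adjJ : jShriek ⊣ jStar),
    iPush.Full ∧ iPush.Faithful ∧ jShriek.Full ∧ jShriek.Faithful ∧
    (∀ X' : C', IsZero (jStar.obj (iPush.obj X'))) ∧
    (∀ X : C, ∃ h : iPush.obj (iStar.obj X) ⟶ (jShriek.obj (jStar.obj X))⟦(1 : ℤ)⟧,
      Triangle.mk (adjJ.counit.app X) (adjI.unit.app X) h ∈ distTriang C)

/-- A recollement `(𝒞', 𝒞, 𝒞'', i^*, i_*, i^!, j_!, j^*, j_*)`, i.e. the data of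
conditions (R1)-(R4): adjoint pairs `(i^*, i_*)`, `(i_*, i^!)`, `(j_!, j^*)`, `(j^*, j_*)`;
`i_*`, `j_!`, `j_*` fully faithful; `j^* i_* = 0`; and the two recollement distinguished
triangles `j_! j^* X ⟶ X ⟶ i_* i^* X ⟶ ⋅[1]` and `i_* i^! X ⟶ X ⟶ j_* j^* X ⟶ ⋅[1]`, whose
morphisms into and out of `X` are counits and units of the adjunctions. -/
def IsRecollement (iStar : C ⥤ C') (iPush : C' ⥤ C) (iShriek : C ⥤ C')
    (jShriek : C'' ⥤ C) (jStar : C ⥤ C'') (jPush : C'' ⥤ C) : Prop :=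
  ∃ (adjI₁ : iStar ⊣ iPush) (adjI₂ : iPush ⊣ iShriek)
    (adjJ₁ : jShriek ⊣ jStar) (adjJ₂ : jStar ⊣ jPush),
    iPush.Full ∧ iPush.Faithful ∧ jShriek.Full ∧ jShriek.Faithful ∧
    jPush.Full ∧ jPush.Faithful ∧
    (∀ X' : C', IsZero (jStar.obj (iPush.obj X'))) ∧
    (∀ X : C, ∃ h : iPush.obj (iStar.obj X) ⟶ (jShriek.obj (jStar.obj X))⟦(1 : ℤ)⟧,
      Triangle.mk (adjJ₁.counit.app X) (adjI₁.unit.app X) h ∈ distTriang C) ∧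
    (∀ X : C, ∃ h : jPush.obj (jStar.obj X) ⟶ (iPush.obj (iShriek.obj X))⟦(1 : ℤ)⟧,
      Triangle.mk (adjI₂.counit.app X) (adjJ₂.unit.app X) h ∈ distTriang C)

/-- An unbounded ladder of triangle functors, encoded by the four families
`a n = i_{2n} : 𝒞' ⥤ 𝒞`, `b n = i_{2n-1} : 𝒞'' ⥤ 𝒞`, `p n = j_{2n-1} : 𝒞 ⥤ 𝒞'` and
`q n = j_{2n} : 𝒞 ⥤ 𝒞''` (`n ∈ ℤ`): any two consecutive rows form a left or a right
recollement of `𝒞` relative to `𝒞'` and `𝒞''`. -/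
structure IsUnboundedLadder (a : ℤ → C' ⥤ C) (b : ℤ → C'' ⥤ C)
    (p : ℤ → C ⥤ C') (q : ℤ → C ⥤ C'') : Prop where
  tri_a : ∀ n, IsTriangleFunctor (a n)
  tri_b : ∀ n, IsTriangleFunctor (b n)
  tri_p : ∀ n, IsTriangleFunctor (p n)
  tri_q : ∀ n, IsTriangleFunctor (q n)
  left : ∀ n : ℤ, IsLeftRecollement (p n) (a n) (b n) (q n)
  right : ∀ n : ℤ, IsLeftRecollement (q n) (b (n + 1)) (a n) (p (n + 1))

/-- The recollement `(i^*, i_*, i^!, j_!, j^*, j_*)` sits in an unbounded ladder, namely as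
the `0`-th recollement `(j_{-1}, i_0, j_1, i_{-1}, j_0, i_1)` of the ladder. -/
def SitsInUnboundedLadder (iStar : C ⥤ C') (iPush : C' ⥤ C) (iShriek : C ⥤ C')
    (jShriek : C'' ⥤ C) (jStar : C ⥤ C'') (jPush : C'' ⥤ C) : Prop :=
  ∃ (a : ℤ → C' ⥤ C) (b : ℤ → C'' ⥤ C) (p : ℤ → C ⥤ C') (q : ℤ → C ⥤ C''),
    IsUnboundedLadder a b p q ∧
    p 0 = iStar ∧ a 0 = iPush ∧ p 1 = iShriek ∧
    b 0 = jShriek ∧ q 0 = jStar ∧ b 1 = jPush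

end TriangulatedPreliminaries
section Statement

open ZeroObject

universe v v' v'' u u' u''

variable {C : Type u} {C' : Type u'} {C'' : Type u''}
  [Category.{v} C] [Category.{v'} C'] [Category.{v''} C'']
  [HasShift C ℤ] [HasShift C' ℤ] [HasShift C'' ℤ]
  [Preadditive C] [Preadditive C'] [Preadditive C'']
  [HasZeroObject C] [HasZeroObject C'] [HasZeroObject C'']
  [∀ n : ℤ, (shiftFunctor C n).Additive] [∀ n : ℤ, (shiftFunctor C' n).Additive]
  [∀ n : ℤ, (shiftFunctor C'' n).Additive]
  [Pretriangulated C] [Pretriangulated C'] [Pretriangulated C'']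

section AuxiliaryLemmas

variable {iStar : C ⥤ C'} {iPush : C' ⥤ C} {iShriek : C ⥤ C'}
  {jShriek : C'' ⥤ C} {jStar : C ⥤ C''} {jPush : C'' ⥤ C}

/-- A faithful additive functor reflects zero objects. -/
lemma aux_reflect_isZero (F : C' ⥤ C) [F.Additive] [F.Faithful] {Y : C'}
    (h : IsZero (F.obj Y)) : IsZero Y := by
  rw [IsZero.iff_id_eq_zero]
  apply F.map_injective
  rw [F.map_id, F.map_zero]
  exact h.eq_of_src _ _

lemma aux_hom_iPush_jPush (adjJ₂ : jStar ⊣ jPush) [jPush.Additive]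
    (hzero : ∀ X' : C', IsZero (jStar.obj (iPush.obj X')))
    {A : C'} {B : C''} (f : iPush.obj A ⟶ jPush.obj B) : f = 0 := by
  have h0 : (adjJ₂.homEquiv (iPush.obj A) B).symm f = 0 := (hzero A).eq_of_src _ _
  have h1 := (adjJ₂.homEquiv (iPush.obj A) B).apply_symm_apply f
  rw [← h1, h0, Adjunction.homEquiv_unit]
  simp

lemma aux_hom_jShriek_iPush (adjJ₁ : jShriek ⊣ jStar) [jShriek.Additive]
    (hzero : ∀ X' : C', IsZero (jStar.obj (iPush.obj X')))
    {A : C'} {B : C''} (f : jShriek.obj B ⟶ iPush.obj A) : f = 0 := by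
  have h0 : adjJ₁.homEquiv B (iPush.obj A) f = 0 := (hzero A).eq_of_tgt _ _
  have h1 := (adjJ₁.homEquiv B (iPush.obj A)).symm_apply_apply f
  rw [← h1, h0, Adjunction.homEquiv_counit]
  simp

lemma aux_hom_iPush_jShriek (adjJ₂ : jStar ⊣ jPush) [jPush.Additive]
    (hzero : ∀ X' : C', IsZero (jStar.obj (iPush.obj X')))
    (e : jPush ≅ jShriek)
    {A : C'} {B : C''} (f : iPush.obj A ⟶ jShriek.obj B) : f = 0 := by
  have h := aux_hom_iPush_jPush adjJ₂ hzero (f ≫ e.inv.app B)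
  have h2 : f = (f ≫ e.inv.app B) ≫ e.hom.app B := by simp
  rw [h2, h, zero_comp]

lemma aux_hom_iPush_jShriek_shift (adjJ₂ : jStar ⊣ jPush) [jPush.Additive]
    [jShriek.CommShift ℤ]
    (hzero : ∀ X' : C', IsZero (jStar.obj (iPush.obj X')))
    (e : jPush ≅ jShriek)
    {A : C'} {B : C''} (f : iPush.obj A ⟶ (jShriek.obj B)⟦(1:ℤ)⟧) : f = 0 := by
  have h := aux_hom_iPush_jShriek adjJ₂ hzero e
    (f ≫ (jShriek.commShiftIso (1:ℤ)).inv.app B)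
  have h2 : f = (f ≫ (jShriek.commShiftIso (1:ℤ)).inv.app B) ≫
      (jShriek.commShiftIso (1:ℤ)).hom.app B := by simp
  rw [h2, h, zero_comp]

lemma aux_hom_jPush_iPush_shift (adjJ₁ : jShriek ⊣ jStar) [jShriek.Additive]
    [iPush.CommShift ℤ]
    (hzero : ∀ X' : C', IsZero (jStar.obj (iPush.obj X')))
    (e : jPush ≅ jShriek)
    {A : C'} {B : C''} (f : jPush.obj B ⟶ (iPush.obj A)⟦(1:ℤ)⟧) : f = 0 := by
  have h := aux_hom_jShriek_iPush adjJ₁ hzero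
    ((e.inv.app B ≫ f) ≫ (iPush.commShiftIso (1:ℤ)).inv.app A)
  have h2 : e.inv.app B ≫ f = 0 := by
    have h3 : e.inv.app B ≫ f = ((e.inv.app B ≫ f) ≫ (iPush.commShiftIso (1:ℤ)).inv.app A) ≫
        (iPush.commShiftIso (1:ℤ)).hom.app A := by simp
    rw [h3, h, zero_comp]
  have h4 : f = e.hom.app B ≫ (e.inv.app B ≫ f) := by simp
  rw [h4, h2, comp_zero]

lemma aux_isZero_iPush_iStar_jShriek (adjI₁ : iStar ⊣ iPush) (adjJ₁ : jShriek ⊣ jStar)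
    [jShriek.Full] [jShriek.Faithful]
    (hT1 : ∀ X : C, ∃ h : iPush.obj (iStar.obj X) ⟶ (jShriek.obj (jStar.obj X))⟦(1 : ℤ)⟧,
      Triangle.mk (adjJ₁.counit.app X) (adjI₁.unit.app X) h ∈ distTriang C)
    (B : C'') : IsZero (iPush.obj (iStar.obj (jShriek.obj B))) := by
  obtain ⟨h, hT⟩ := hT1 (jShriek.obj B)
  have h1 := adjJ₁.left_triangle_components B
  have h2 : inv (jShriek.map (adjJ₁.unit.app B)) = adjJ₁.counit.app (jShriek.obj B) :=
    IsIso.inv_eq_of_hom_inv_id h1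
  have h3 : IsIso (adjJ₁.counit.app (jShriek.obj B)) := by rw [← h2]; infer_instance
  exact Triangle.isZero₃_of_isIso₁ _ hT h3

lemma aux_auxA (adjI₁ : iStar ⊣ iPush) (adjI₂ : iPush ⊣ iShriek)
    (adjJ₁ : jShriek ⊣ jStar) (adjJ₂ : jStar ⊣ jPush)
    [jShriek.Full] [jShriek.Faithful]
    (hT1 : ∀ X : C, ∃ h : iPush.obj (iStar.obj X) ⟶ (jShriek.obj (jStar.obj X))⟦(1 : ℤ)⟧,
      Triangle.mk (adjJ₁.counit.app X) (adjI₁.unit.app X) h ∈ distTriang C)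
    (hT2 : ∀ X : C, ∃ h : jPush.obj (jStar.obj X) ⟶ (iPush.obj (iShriek.obj X))⟦(1 : ℤ)⟧,
      Triangle.mk (adjI₂.counit.app X) (adjJ₂.unit.app X) h ∈ distTriang C)
    (e : iShriek ≅ iStar) : Nonempty (jPush ≅ jShriek) := by
  have hiso : ∀ B : C'', IsIso (adjJ₂.unit.app (jShriek.obj B)) := by
    intro B
    obtain ⟨h, hT⟩ := hT2 (jShriek.obj B)
    have hz : IsZero (iPush.obj (iShriek.obj (jShriek.obj B))) :=
      (aux_isZero_iPush_iStar_jShriek adjI₁ adjJ₁ hT1 B).of_iso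
        (iPush.mapIso (e.app (jShriek.obj B)))
    exact (Triangle.isZero₁_iff_isIso₂ _ hT).1 hz
  refine ⟨(NatIso.ofComponents (fun B => (@asIso _ _ _ _ _ (hiso B)) ≪≫
    jPush.mapIso (asIso (adjJ₁.unit.app B)).symm) ?_).symm⟩
  intro B B' f
  dsimp
  have hn := adjJ₂.unit.naturality (jShriek.map f)
  dsimp at hn
  rw [← Category.assoc, hn, Category.assoc, Category.assoc, ← jPush.map_comp, ← jPush.map_comp]
  have hn2 := adjJ₁.unit.naturality f
  dsimp at hn2
  have hinner : jStar.map (jShriek.map f) ≫ inv (adjJ₁.unit.app B') =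
      inv (adjJ₁.unit.app B) ≫ f := by
    rw [IsIso.comp_inv_eq, Category.assoc, IsIso.eq_inv_comp]
    exact hn2.symm
  rw [hinner]

lemma aux_auxB (adjI₁ : iStar ⊣ iPush) (adjI₂ : iPush ⊣ iShriek)
    (adjJ₁ : jShriek ⊣ jStar) (adjJ₂ : jStar ⊣ jPush)
    [iPush.Full] [iPush.Faithful] [jShriek.Additive] [jPush.Additive]
    [jShriek.CommShift ℤ] [iPush.CommShift ℤ]
    (hzero : ∀ X' : C', IsZero (jStar.obj (iPush.obj X')))
    (hT1 : ∀ X : C, ∃ h : iPush.obj (iStar.obj X) ⟶ (jShriek.obj (jStar.obj X))⟦(1 : ℤ)⟧,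
      Triangle.mk (adjJ₁.counit.app X) (adjI₁.unit.app X) h ∈ distTriang C)
    (hT2 : ∀ X : C, ∃ h : jPush.obj (jStar.obj X) ⟶ (iPush.obj (iShriek.obj X))⟦(1 : ℤ)⟧,
      Triangle.mk (adjI₂.counit.app X) (adjJ₂.unit.app X) h ∈ distTriang C)
    (e : jPush ≅ jShriek) : Nonempty (iShriek ≅ iStar) := by
  let θ : iShriek ⋙ iPush ⟶ iStar ⋙ iPush := adjI₂.counit ≫ adjI₁.unit
  have happ : ∀ X : C, θ.app X = adjI₂.counit.app X ≫ adjI₁.unit.app X := fun X => rfl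
  have hiso : ∀ X : C, IsIso (θ.app X) := by
    intro X
    obtain ⟨h1, hT1'⟩ := hT1 X
    obtain ⟨h2, hT2'⟩ := hT2 X
    have hh1 : h1 = 0 := aux_hom_iPush_jShriek_shift adjJ₂ hzero e h1
    have hh2 : h2 = 0 := aux_hom_jPush_iPush_shift adjJ₁ hzero e h2
    have hepi : Epi (adjI₁.unit.app X) := Triangle.epi₂ _ hT1' hh1
    have hmono : Mono (adjI₂.counit.app X) := Triangle.mono₁ _ hT2' hh2
    haveI := isSplitEpi_of_epi (adjI₁.unit.app X)
    haveI := isSplitMono_of_mono (adjI₂.counit.app X)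
    have hσ2 : section_ (adjI₁.unit.app X) ≫ adjJ₂.unit.app X = 0 :=
      aux_hom_iPush_jPush adjJ₂ hzero _
    obtain ⟨x', hx'0⟩ : ∃ x' : iPush.obj (iStar.obj X) ⟶ iPush.obj (iShriek.obj X),
        section_ (adjI₁.unit.app X) = x' ≫ adjI₂.counit.app X :=
      Triangle.coyoneda_exact₂ _ hT2' _ hσ2
    have hx' : section_ (adjI₁.unit.app X) = x' ≫ adjI₂.counit.app X := hx'0
    have hxinv : x' ≫ θ.app X = 𝟙 _ := by
      rw [happ, ← Category.assoc, ← hx', IsSplitEpi.id]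
    have hmono' : ∀ (T : C) (x : T ⟶ iPush.obj (iShriek.obj X)), x ≫ θ.app X = 0 → x = 0 := by
      intro T x hx
      rw [happ, ← Category.assoc] at hx
      obtain ⟨y', hy'0⟩ : ∃ y' : T ⟶ jShriek.obj (jStar.obj X),
          x ≫ adjI₂.counit.app X = y' ≫ adjJ₁.counit.app X :=
        Triangle.coyoneda_exact₂ _ hT1' (x ≫ adjI₂.counit.app X) hx
      have hy' : x ≫ adjI₂.counit.app X = y' ≫ adjJ₁.counit.app X := hy'0
      have hr : x = (x ≫ adjI₂.counit.app X) ≫ retraction (adjI₂.counit.app X) := by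
        rw [Category.assoc, IsSplitMono.id, Category.comp_id]
      rw [hr, hy', Category.assoc,
        aux_hom_jShriek_iPush adjJ₁ hzero
          (adjJ₁.counit.app X ≫ retraction (adjI₂.counit.app X)), comp_zero]
    refine ⟨x', ?_, hxinv⟩
    have hsub := hmono' _ (θ.app X ≫ x' - 𝟙 _) ?_
    · rw [sub_eq_zero] at hsub; exact hsub
    · rw [Preadditive.sub_comp, Category.assoc, hxinv]
      simp
  haveI : IsIso θ := NatIso.isIso_of_isIso_app θ
  exact ⟨Functor.fullyFaithfulCancelRight iPush (asIso θ)⟩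


noncomputable def aux_isoC (adjI₁ : iStar ⊣ iPush) [iPush.Full] [iPush.Faithful]
    (hzero : ∀ X' : C', IsZero (jStar.obj (iPush.obj X'))) :
    iPush ⋙ iStar.prod' jStar ≅ (𝟭 C').prod' ((Functor.const C').obj (0 : C'')) :=
  NatIso.ofComponents
    (fun A => Iso.prod (asIso (adjI₁.counit.app A)) ((hzero A).isoZero))
    (by
      intro A A' f
      apply Prod.ext
      · have hn := adjI₁.counit.naturality f
        dsimp at hn ⊢
        exact hn
      · exact (isZero_zero C'').eq_of_tgt _ _)

noncomputable def aux_isoE (adjJ₁ : jShriek ⊣ jStar) [jShriek.Full] [jShriek.Faithful]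
    (hzI : ∀ B : C'', IsZero (iStar.obj (jShriek.obj B))) :
    jShriek ⋙ iStar.prod' jStar ≅ ((Functor.const C'').obj (0 : C')).prod' (𝟭 C'') :=
  NatIso.ofComponents
    (fun B => Iso.prod ((hzI B).isoZero) (asIso (adjJ₁.unit.app B)).symm)
    (by
      intro B B' f
      apply Prod.ext
      · exact (isZero_zero C').eq_of_tgt _ _
      · have hn := adjJ₁.unit.naturality f
        dsimp [Iso.prod_hom] at hn ⊢
        change jStar.map (jShriek.map f) ≫ inv (adjJ₁.unit.app B') = inv (adjJ₁.unit.app B) ≫ f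
        rw [IsIso.comp_inv_eq, Category.assoc, IsIso.eq_inv_comp]
        exact hn.symm)

lemma aux_auxC (adjI₁ : iStar ⊣ iPush) (adjI₂ : iPush ⊣ iShriek)
    (adjJ₁ : jShriek ⊣ jStar) (adjJ₂ : jStar ⊣ jPush)
    [iPush.Full] [iPush.Faithful] [jShriek.Full] [jShriek.Faithful]
    [iStar.CommShift ℤ] [iStar.IsTriangulated] [jStar.CommShift ℤ] [jStar.IsTriangulated]
    [jShriek.CommShift ℤ] [jShriek.IsTriangulated]
    [iPush.CommShift ℤ] [iPush.IsTriangulated] [jPush.CommShift ℤ] [jPush.IsTriangulated]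
    (hzero : ∀ X' : C', IsZero (jStar.obj (iPush.obj X')))
    (hT1 : ∀ X : C, ∃ h : iPush.obj (iStar.obj X) ⟶ (jShriek.obj (jStar.obj X))⟦(1 : ℤ)⟧,
      Triangle.mk (adjJ₁.counit.app X) (adjI₁.unit.app X) h ∈ distTriang C)
    (hT2 : ∀ X : C, ∃ h : jPush.obj (jStar.obj X) ⟶ (iPush.obj (iShriek.obj X))⟦(1 : ℤ)⟧,
      Triangle.mk (adjI₂.counit.app X) (adjJ₂.unit.app X) h ∈ distTriang C)
    (eI : iShriek ≅ iStar) (eJ : jPush ≅ jShriek) :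
    ∃ F : C ⥤ C' × C'', F.IsEquivalence ∧
        Nonempty (iStar ≅ F ⋙ CategoryTheory.Prod.fst C' C'') ∧
        Nonempty (iPush ⋙ F ≅ (𝟭 C').prod' ((Functor.const C').obj (0 : C''))) ∧
        Nonempty (iShriek ≅ F ⋙ CategoryTheory.Prod.fst C' C'') ∧
        Nonempty (jShriek ⋙ F ≅ ((Functor.const C'').obj (0 : C')).prod' (𝟭 C'')) ∧
        Nonempty (jStar ≅ F ⋙ CategoryTheory.Prod.snd C' C'') ∧
        Nonempty (jPush ⋙ F ≅ ((Functor.const C'').obj (0 : C')).prod' (𝟭 C'')) := by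
  have hzI : ∀ B : C'', IsZero (iStar.obj (jShriek.obj B)) := fun B =>
    aux_reflect_isZero iPush (aux_isZero_iPush_iStar_jShriek adjI₁ adjJ₁ hT1 B)
  -- faithfulness core
  have hcore : ∀ {X Y : C} (f : X ⟶ Y), iStar.map f = 0 → jStar.map f = 0 → f = 0 := by
    intro X Y f hi hj
    obtain ⟨h1Y, hT1Y⟩ := hT1 Y
    obtain ⟨h1X, hT1X⟩ := hT1 X
    have hfη : f ≫ adjI₁.unit.app Y = 0 := by
      have hn := adjI₁.unit.naturality f
      dsimp at hn
      rw [hn, hi, Functor.map_zero, comp_zero]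
    obtain ⟨f', hf'0⟩ : ∃ f' : X ⟶ jShriek.obj (jStar.obj Y), f = f' ≫ adjJ₁.counit.app Y :=
      Triangle.coyoneda_exact₂ _ hT1Y f hfη
    have hf' : f = f' ≫ adjJ₁.counit.app Y := hf'0
    have hciso : IsIso (jStar.map (adjJ₁.counit.app Y)) := by
      have he1 := adjJ₁.right_triangle_components Y
      have he2 : inv (adjJ₁.unit.app (jStar.obj Y)) = jStar.map (adjJ₁.counit.app Y) :=
        IsIso.inv_eq_of_hom_inv_id he1
      rw [← he2]; infer_instance
    have hjf' : jStar.map f' = 0 := by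
      have hcc : jStar.map f' ≫ jStar.map (adjJ₁.counit.app Y) = 0 := by
        rw [← Functor.map_comp, ← hf', hj]
      rwa [Preadditive.IsIso.comp_right_eq_zero (jStar.map f') (jStar.map (adjJ₁.counit.app Y))] at hcc
    obtain ⟨gg, hgg⟩ := jShriek.map_surjective (adjJ₁.counit.app X ≫ f')
    have hgg0 : gg = 0 := by
      have hsz : jStar.map (jShriek.map gg) = 0 := by
        rw [hgg, Functor.map_comp, hjf', comp_zero]
      have hn := adjJ₁.unit.naturality gg
      dsimp at hn
      rw [hsz, comp_zero] at hn
      rwa [Preadditive.IsIso.comp_right_eq_zero gg (adjJ₁.unit.app (jStar.obj Y))] at hn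
    have hε : adjJ₁.counit.app X ≫ f' = 0 := by rw [← hgg, hgg0, Functor.map_zero]
    obtain ⟨g'', hg''0⟩ : ∃ g'' : iPush.obj (iStar.obj X) ⟶ jShriek.obj (jStar.obj Y),
        f' = adjI₁.unit.app X ≫ g'' :=
      Triangle.yoneda_exact₂ _ hT1X f' hε
    have hg'' : f' = adjI₁.unit.app X ≫ g'' := hg''0
    have hgz : g'' = 0 := aux_hom_iPush_jShriek adjJ₂ hzero eJ g''
    rw [hf', hg'', hgz, comp_zero, zero_comp]
  -- fullness core
  have hcorefull : ∀ (X Y : C) (u : iStar.obj X ⟶ iStar.obj Y) (v : jStar.obj X ⟶ jStar.obj Y),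
      ∃ f : X ⟶ Y, iStar.map f = u ∧ jStar.map f = v := by
    intro X Y u v
    obtain ⟨h1X, hT1X⟩ := hT1 X
    obtain ⟨h1Y, hT1Y⟩ := hT1 Y
    have hX0 : h1X = 0 := aux_hom_iPush_jShriek_shift adjJ₂ hzero eJ h1X
    have hY0 : h1Y = 0 := aux_hom_iPush_jShriek_shift adjJ₂ hzero eJ h1Y
    have hepi : Epi (adjI₁.unit.app Y) := Triangle.epi₂ _ hT1Y hY0
    have hmono : Mono (adjJ₁.counit.app X) := Triangle.mono₁ _ hT1X hX0
    haveI := isSplitEpi_of_epi (adjI₁.unit.app Y)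
    haveI := isSplitMono_of_mono (adjJ₁.counit.app X)
    refine ⟨adjI₁.unit.app X ≫ iPush.map u ≫ section_ (adjI₁.unit.app Y) +
      retraction (adjJ₁.counit.app X) ≫ jShriek.map v ≫ adjJ₁.counit.app Y, ?_, ?_⟩
    · dsimp only [Functor.id_obj, Functor.comp_obj]
      rw [Functor.map_add, Functor.map_comp, Functor.map_comp, Functor.map_comp,
        Functor.map_comp]
      have key1 : iStar.map (section_ (adjI₁.unit.app Y)) = adjI₁.counit.app (iStar.obj Y) := by
        have e1 : iStar.map (section_ (adjI₁.unit.app Y)) ≫ iStar.map (adjI₁.unit.app Y) =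
            𝟙 _ := by
          rw [← Functor.map_comp, IsSplitEpi.id, CategoryTheory.Functor.map_id]
        have e2 := adjI₁.left_triangle_components Y
        dsimp only [Functor.id_obj, Functor.comp_obj] at e1 e2 ⊢
        calc iStar.map (section_ (adjI₁.unit.app Y))
            = iStar.map (section_ (adjI₁.unit.app Y)) ≫ (iStar.map (adjI₁.unit.app Y) ≫
              adjI₁.counit.app (iStar.obj Y)) := by rw [e2]; simp
          _ = adjI₁.counit.app (iStar.obj Y) := by rw [← Category.assoc, e1]; simp
      have hz1 : iStar.map (retraction (adjJ₁.counit.app X)) =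
          (0 : iStar.obj X ⟶ iStar.obj (jShriek.obj (jStar.obj X))) :=
        (hzI (jStar.obj X)).eq_of_tgt _ _
      rw [key1, hz1, zero_comp]
      have hn := adjI₁.counit.naturality u
      dsimp at hn
      rw [hn, ← Category.assoc, adjI₁.left_triangle_components X, Category.id_comp, add_zero]
    · dsimp only [Functor.id_obj, Functor.comp_obj]
      rw [Functor.map_add, Functor.map_comp, Functor.map_comp, Functor.map_comp,
        Functor.map_comp]
      have hz2 : jStar.map (adjI₁.unit.app X) =
          (0 : jStar.obj X ⟶ jStar.obj (iPush.obj (iStar.obj X))) :=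
        (hzero (iStar.obj X)).eq_of_tgt _ _
      rw [hz2, zero_comp]
      have key2 : jStar.map (retraction (adjJ₁.counit.app X)) =
          adjJ₁.unit.app (jStar.obj X) := by
        have e1 : jStar.map (adjJ₁.counit.app X) ≫
            jStar.map (retraction (adjJ₁.counit.app X)) = 𝟙 _ := by
          rw [← Functor.map_comp, IsSplitMono.id, CategoryTheory.Functor.map_id]
        have e2 := adjJ₁.right_triangle_components X
        dsimp only [Functor.id_obj, Functor.comp_obj] at e1 e2 ⊢
        calc jStar.map (retraction (adjJ₁.counit.app X))
            = (adjJ₁.unit.app (jStar.obj X) ≫ jStar.map (adjJ₁.counit.app X)) ≫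
              jStar.map (retraction (adjJ₁.counit.app X)) := by rw [e2]; simp
          _ = adjJ₁.unit.app (jStar.obj X) := by rw [Category.assoc, e1]; simp
      rw [key2, zero_add]
      have hn := adjJ₁.unit.naturality v
      dsimp at hn
      rw [← Category.assoc, ← hn, Category.assoc, adjJ₁.right_triangle_components Y,
        Category.comp_id]
  haveI hFaith : (iStar.prod' jStar).Faithful := by
    refine ⟨fun {X Y f g} h => ?_⟩
    have h1 : iStar.map f = iStar.map g := congrArg Prod.fst h
    have h2 : jStar.map f = jStar.map g := congrArg Prod.snd h
    have hs := hcore (f - g) (by rw [Functor.map_sub, h1, sub_self])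
      (by rw [Functor.map_sub, h2, sub_self])
    rw [← sub_eq_zero]
    exact hs
  haveI hFull : (iStar.prod' jStar).Full := by
    refine ⟨fun {X Y} uv => ?_⟩
    obtain ⟨f, hf1, hf2⟩ := hcorefull X Y uv.1 uv.2
    exact ⟨f, Prod.ext hf1 hf2⟩
  haveI hEss : (iStar.prod' jStar).EssSurj := by
    refine ⟨fun P => ?_⟩
    obtain ⟨A, B⟩ := P
    have hTb := binaryBiproductTriangle_distinguished (jShriek.obj B) (iPush.obj A)
    have h1 : IsIso (iStar.map (biprod.snd : jShriek.obj B ⊞ iPush.obj A ⟶ iPush.obj A)) := by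
      have hd := iStar.map_distinguished _ hTb
      exact (Triangle.isZero₁_iff_isIso₂ _ hd).1 (hzI B)
    have h2 : IsIso (jStar.map (biprod.inl : jShriek.obj B ⟶ jShriek.obj B ⊞ iPush.obj A)) := by
      have hd := jStar.map_distinguished _ hTb
      exact (Triangle.isZero₃_iff_isIso₁ _ hd).1 (hzero A)
    exact ⟨jShriek.obj B ⊞ iPush.obj A,
      ⟨Iso.prod (asIso (iStar.map biprod.snd) ≪≫ asIso (adjI₁.counit.app A))
        ((asIso (adjJ₁.unit.app B) ≪≫ asIso (jStar.map biprod.inl)).symm)⟩⟩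
  haveI hEq : (iStar.prod' jStar).IsEquivalence := { }
  exact ⟨iStar.prod' jStar, hEq,
    ⟨(Functor.prod'CompFst iStar jStar).symm⟩,
    ⟨aux_isoC adjI₁ hzero⟩,
    ⟨eI ≪≫ (Functor.prod'CompFst iStar jStar).symm⟩,
    ⟨aux_isoE adjJ₁ hzI⟩,
    ⟨(Functor.prod'CompSnd iStar jStar).symm⟩,
    ⟨Functor.isoWhiskerRight eJ (iStar.prod' jStar) ≪≫ aux_isoE adjJ₁ hzI⟩⟩

end AuxiliaryLemmas

/-- **Proposition 3.4.** A recollement `(𝒞', 𝒞, 𝒞'', i^*, i_*, i^!, j_!, j^*, j_*)` is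
splitting (i.e. `i^! ≅ i^*` and `j_* ≅ j_!`) if and only if `i^! ≅ i^*`, if and only if
`j_* ≅ j_!`, if and only if there is an equivalence of recollements
`(Id_{𝒞'}, F, Id_{𝒞''})` onto the product recollement
`(𝒞', 𝒞' × 𝒞'', 𝒞'', p₁, σ₁, p₁, σ₂, p₂, σ₂)`. -/
theorem splitting_recollement_tfae
    (iStar : C ⥤ C') (iPush : C' ⥤ C) (iShriek : C ⥤ C')
    (jShriek : C'' ⥤ C) (jStar : C ⥤ C'') (jPush : C'' ⥤ C)
    [iStar.CommShift ℤ] [iStar.IsTriangulated] [iPush.CommShift ℤ] [iPush.IsTriangulated]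
    [iShriek.CommShift ℤ] [iShriek.IsTriangulated] [jShriek.CommShift ℤ]
    [jShriek.IsTriangulated] [jStar.CommShift ℤ] [jStar.IsTriangulated]
    [jPush.CommShift ℤ] [jPush.IsTriangulated]
    (hrec : IsRecollement iStar iPush iShriek jShriek jStar jPush) :
    ((Nonempty (iShriek ≅ iStar) ∧ Nonempty (jPush ≅ jShriek)) ↔
        Nonempty (iShriek ≅ iStar)) ∧
    ((Nonempty (iShriek ≅ iStar) ∧ Nonempty (jPush ≅ jShriek)) ↔
        Nonempty (jPush ≅ jShriek)) ∧
    ((Nonempty (iShriek ≅ iStar) ∧ Nonempty (jPush ≅ jShriek)) ↔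
      ∃ F : C ⥤ C' × C'', F.IsEquivalence ∧
        Nonempty (iStar ≅ F ⋙ CategoryTheory.Prod.fst C' C'') ∧
        Nonempty (iPush ⋙ F ≅ (𝟭 C').prod' ((Functor.const C').obj (0 : C''))) ∧
        Nonempty (iShriek ≅ F ⋙ CategoryTheory.Prod.fst C' C'') ∧
        Nonempty (jShriek ⋙ F ≅ ((Functor.const C'').obj (0 : C')).prod' (𝟭 C'')) ∧
        Nonempty (jStar ≅ F ⋙ CategoryTheory.Prod.snd C' C'') ∧
        Nonempty (jPush ⋙ F ≅ ((Functor.const C'').obj (0 : C')).prod' (𝟭 C''))) := by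
  obtain ⟨adjI₁, adjI₂, adjJ₁, adjJ₂, h1, h2, h3, h4, h5, h6, hzero, hT1, hT2⟩ := hrec
  haveI := h1; haveI := h2; haveI := h3; haveI := h4; haveI := h5; haveI := h6
  have hA : Nonempty (iShriek ≅ iStar) → Nonempty (jPush ≅ jShriek) := by
    rintro ⟨e⟩
    exact aux_auxA adjI₁ adjI₂ adjJ₁ adjJ₂ hT1 hT2 e
  have hB : Nonempty (jPush ≅ jShriek) → Nonempty (iShriek ≅ iStar) := by
    rintro ⟨e⟩
    exact aux_auxB adjI₁ adjI₂ adjJ₁ adjJ₂ hzero hT1 hT2 e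
  refine ⟨⟨And.left, fun h => ⟨h, hA h⟩⟩, ⟨And.right, fun h => ⟨hB h, h⟩⟩, ?_, ?_⟩
  · rintro ⟨⟨eI⟩, ⟨eJ⟩⟩
    exact aux_auxC adjI₁ adjI₂ adjJ₁ adjJ₂ hzero hT1 hT2 eI eJ
  · rintro ⟨F, hF, ⟨b⟩, -, ⟨d⟩, ⟨ee⟩, -, ⟨gg⟩⟩
    haveI := hF
    exact ⟨⟨d ≪≫ b.symm⟩, ⟨Functor.fullyFaithfulCancelRight F (gg ≪≫ ee.symm)⟩⟩

end Statement
end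

section
/- Let 𝒞 be a d-Calabi-Yau triangulated category. Then any left (or right) recollement of 𝒞 sits in a splitting recollement; in particular, any recollement of 𝒞 is splitting, i.e., i^! ≅ i^* and j_* ≅ j_!. -/
/-!
STATEMENT 14: Let 𝒞 be a d-Calabi-Yau triangulated category. Then any left (or right)
recollement of 𝒞 sits in a splitting recollement; in particular, any recollement of 𝒞 is
splitting, i.e., i^! ≅ i^* and j_* ≅ j_!.
-/
open CategoryTheory CategoryTheory.Limits CategoryTheory.Pretriangulated

section Serre

variable (k : Type*) [Field k]
variable (E : Type*) [Category E] [Preadditive E] [CategoryTheory.Linear k E]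

/-- The data exhibiting `S` as a right Serre functor on a Hom-finite `k`-linear category:
`k`-linear isomorphisms `Hom(X, Y) ≅ Hom(Y, S X)^*`, natural in `X` and `Y`. -/
structure RightSerreData (S : E ⥤ E) where
  e : ∀ X Y : E, (X ⟶ Y) ≃ₗ[k] Module.Dual k (Y ⟶ S.obj X)
  nat_right : ∀ {X Y Y' : E} (h : X ⟶ Y) (g : Y ⟶ Y') (u : Y' ⟶ S.obj X),
    e X Y' (h ≫ g) u = e X Y h (g ≫ u)
  nat_left : ∀ {X X' Y : E} (f : X' ⟶ X) (h : X ⟶ Y) (u : Y ⟶ S.obj X'),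
    e X' Y (f ≫ h) u = e X Y h (u ≫ S.map f)

/-- A category has a Serre functor if it has a right Serre functor which is an
equivalence. -/
def HasSerreFunctor : Prop :=
  ∃ S : E ⥤ E, Nonempty (RightSerreData k E S) ∧ S.IsEquivalence

end Serre

section FlipAdjunction

universe w₀ v₁ v₂ u₁ u₂

variable {k : Type w₀} [Field k] {d : ℤ}
variable {C : Type u₁} [Category.{v₁} C] [Preadditive C] [CategoryTheory.Linear k C]
  [HasShift C ℤ]
variable {D : Type u₂} [Category.{v₂} D]

namespace SplittingAux

/-- Morphisms agree if they pair equally under the Serre data. -/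
lemma serre_hom_ext (sd : RightSerreData k C (shiftFunctor C d)) {W Y : C}
    {f g : W ⟶ Y}
    (h : ∀ t : Y ⟶ (shiftFunctor C d).obj W, sd.e W Y f t = sd.e W Y g t) : f = g :=
  (sd.e W Y).injective (LinearMap.ext h)

/-- If `F ⊣ G` with `G` fully faithful and the essential image of `G` stable under the
`d`-th shift, then in presence of Serre duality `Hom(W, X) ≅ Hom(W, X)^**`-style arguments
produce an adjunction `G ⊣ F`. -/
lemma flipAdjunctionLeft (sd : RightSerreData k C (shiftFunctor C d))
    (F : C ⥤ D) (G : D ⥤ C) (adj : F ⊣ G) [G.Full] [G.Faithful]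
    (hshift : ∀ A : D, ∃ B : D, Nonempty ((shiftFunctor C d).obj (G.obj A) ≅ G.obj B)) :
    Nonempty (G ⊣ F) := by
  have ff : G.FullyFaithful := Functor.FullyFaithful.ofFullyFaithful G
  have bijLeft : ∀ (X : C) (V : C), (∃ B : D, Nonempty (V ≅ G.obj B)) →
      Function.Bijective (fun g : G.obj (F.obj X) ⟶ V => adj.unit.app X ≫ g) := by
    rintro X V ⟨B, ⟨σ⟩⟩
    constructor
    · intro g₁ g₂ h
      have e2 : (adj.homEquiv X B) (ff.preimage (g₁ ≫ σ.hom))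
          = (adj.homEquiv X B) (ff.preimage (g₂ ≫ σ.hom)) := by
        rw [Adjunction.homEquiv_unit, Adjunction.homEquiv_unit,
          ff.map_preimage, ff.map_preimage, ← Category.assoc, ← Category.assoc]
        dsimp only at h
        rw [h]
      have e3 := congrArg G.map ((adj.homEquiv X B).injective e2)
      rw [ff.map_preimage, ff.map_preimage] at e3
      calc g₁ = (g₁ ≫ σ.hom) ≫ σ.inv := by simp
        _ = (g₂ ≫ σ.hom) ≫ σ.inv := by rw [e3]
        _ = g₂ := by simp
    · intro h
      refine ⟨G.map ((adj.homEquiv X B).symm (h ≫ σ.hom)) ≫ σ.inv, ?_⟩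
      have e1 : adj.unit.app X ≫ G.map ((adj.homEquiv X B).symm (h ≫ σ.hom))
          = h ≫ σ.hom := by
        conv_rhs => rw [← Equiv.apply_symm_apply (adj.homEquiv X B) (h ≫ σ.hom),
          Adjunction.homEquiv_unit]
      show adj.unit.app X ≫ G.map ((adj.homEquiv X B).symm (h ≫ σ.hom)) ≫ σ.inv = h
      rw [← Category.assoc, e1, Category.assoc, Iso.hom_inv_id, Category.comp_id]
  let leq : ∀ (X : C) (A : D),
      (G.obj (F.obj X) ⟶ (shiftFunctor C d).obj (G.obj A)) ≃ₗ[k]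
        (X ⟶ (shiftFunctor C d).obj (G.obj A)) := fun X A =>
    LinearEquiv.ofBijective (CategoryTheory.Linear.leftComp k _ (adj.unit.app X))
      (bijLeft X _ (hshift A))
  let mid : ∀ (A : D) (X : C), (G.obj A ⟶ X) ≃ (G.obj A ⟶ G.obj (F.obj X)) := fun A X =>
    (sd.e (G.obj A) X).toEquiv.trans
      ((leq X A).dualMap.toEquiv.trans (sd.e (G.obj A) (G.obj (F.obj X))).symm.toEquiv)
  have mid_eval : ∀ (A : D) (X : C) (u : G.obj A ⟶ X)
      (t : G.obj (F.obj X) ⟶ (shiftFunctor C d).obj (G.obj A)),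
      sd.e (G.obj A) (G.obj (F.obj X)) (mid A X u) t
        = sd.e (G.obj A) X u (adj.unit.app X ≫ t) := by
    intro A X u t
    show sd.e _ _ ((sd.e (G.obj A) (G.obj (F.obj X))).symm
      ((leq X A).dualMap (sd.e (G.obj A) X u))) t = _
    rw [LinearEquiv.apply_symm_apply, LinearEquiv.dualMap_apply]
    rfl
  -- forward naturality in the `D`-variable (for arbitrary maps between `G`-objects)
  have natL : ∀ {A A' : D} (X : C) (w : G.obj A' ⟶ G.obj A) (u : G.obj A ⟶ X),
      mid A' X (w ≫ u) = w ≫ mid A X u := by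
    intro A A' X w u
    apply serre_hom_ext sd
    intro t
    rw [mid_eval, sd.nat_left w u, sd.nat_left w (mid A X u) t, mid_eval, Category.assoc]
  -- forward naturality in the `C`-variable
  have natR : ∀ (A : D) {X X' : C} (u : G.obj A ⟶ X) (g : X ⟶ X'),
      mid A X' (u ≫ g) = mid A X u ≫ G.map (F.map g) := by
    intro A X X' u g
    apply serre_hom_ext sd
    intro t
    rw [mid_eval, sd.nat_right u g, sd.nat_right (mid A X u) (G.map (F.map g)) t, mid_eval]
    congr 1
    have hn := adj.unit.naturality g
    dsimp only [Functor.comp_map, Functor.id_map] at hn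
    simp only [← Category.assoc]
    rw [hn]
  refine ⟨Adjunction.mkOfHomEquiv
    { homEquiv := fun A X =>
        { toFun := fun u => ff.preimage (mid A X u)
          invFun := fun g => (mid A X).symm (G.map g)
          left_inv := fun u => by
            dsimp only
            rw [ff.map_preimage, Equiv.symm_apply_apply]
          right_inv := fun g => by
            dsimp only
            rw [Equiv.apply_symm_apply, ff.preimage_map] }
      homEquiv_naturality_left_symm := ?_
      homEquiv_naturality_right := ?_ }⟩
  · intro A' A X f g
    simp only [Equiv.coe_fn_symm_mk]
    apply (mid A' X).injective
    rw [Equiv.apply_symm_apply, natL, Equiv.apply_symm_apply, G.map_comp]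
  · intro A X X' f g
    simp only [Equiv.coe_fn_mk]
    rw [natR]
    apply ff.map_injective
    rw [ff.map_preimage, G.map_comp, ff.map_preimage]


/-- If `F ⊣ G` with `F` fully faithful, and there is a natural family
`μ X : (F G X)⟦d⟧ ⟶ X⟦d⟧` inducing bijections on morphisms from objects in the image of
`F`, then Serre duality produces an adjunction `G ⊣ F`. -/
lemma flipAdjunctionRight (sd : RightSerreData k C (shiftFunctor C d))
    (F : D ⥤ C) (G : C ⥤ D) (adj : F ⊣ G) [F.Full] [F.Faithful]
    (μ : ∀ X : C, (shiftFunctor C d).obj (F.obj (G.obj X)) ⟶ (shiftFunctor C d).obj X)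
    (hnat : ∀ {X' X : C} (f : X' ⟶ X),
      (shiftFunctor C d).map (F.map (G.map f)) ≫ μ X = μ X' ≫ (shiftFunctor C d).map f)
    (hbij : ∀ (B : D) (X : C),
      Function.Bijective
        (fun t : F.obj B ⟶ (shiftFunctor C d).obj (F.obj (G.obj X)) => t ≫ μ X)) :
    Nonempty (G ⊣ F) := by
  have ff : F.FullyFaithful := Functor.FullyFaithful.ofFullyFaithful F
  let θeq : ∀ (X : C) (B : D),
      (F.obj B ⟶ (shiftFunctor C d).obj (F.obj (G.obj X))) ≃ₗ[k]
        (F.obj B ⟶ (shiftFunctor C d).obj X) := fun X B =>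
    LinearEquiv.ofBijective (CategoryTheory.Linear.rightComp k _ (μ X)) (hbij B X)
  let θ : ∀ (X : C) (B : D), (F.obj B ⟶ (shiftFunctor C d).obj X) →
      (F.obj B ⟶ (shiftFunctor C d).obj (F.obj (G.obj X))) := fun X B v => (θeq X B).symm v
  have θcomp : ∀ (X : C) (B : D) (v : F.obj B ⟶ (shiftFunctor C d).obj X),
      θ X B v ≫ μ X = v := fun X B v => (θeq X B).apply_symm_apply v
  have θuniq : ∀ (X : C) (B : D) (t : F.obj B ⟶ (shiftFunctor C d).obj (F.obj (G.obj X)))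
      (v : F.obj B ⟶ (shiftFunctor C d).obj X), t ≫ μ X = v → t = θ X B v := by
    intro X B t v h
    apply (hbij B X).1
    show t ≫ μ X = θ X B v ≫ μ X
    rw [h, θcomp]
  let mid : ∀ (X : C) (B : D), (F.obj (G.obj X) ⟶ F.obj B) ≃ (X ⟶ F.obj B) := fun X B =>
    (sd.e (F.obj (G.obj X)) (F.obj B)).toEquiv.trans
      ((θeq X B).symm.dualMap.toEquiv.trans (sd.e X (F.obj B)).symm.toEquiv)
  have mid_eval : ∀ (X : C) (B : D) (u : F.obj (G.obj X) ⟶ F.obj B)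
      (v : F.obj B ⟶ (shiftFunctor C d).obj X),
      sd.e X (F.obj B) (mid X B u) v = sd.e (F.obj (G.obj X)) (F.obj B) u (θ X B v) := by
    intro X B u v
    show sd.e _ _ ((sd.e X (F.obj B)).symm
      ((θeq X B).symm.dualMap (sd.e (F.obj (G.obj X)) (F.obj B) u))) v = _
    rw [LinearEquiv.apply_symm_apply, LinearEquiv.dualMap_apply]
  have natR' : ∀ (X : C) {B B' : D} (u : F.obj (G.obj X) ⟶ F.obj B) (w : F.obj B ⟶ F.obj B'),
      mid X B' (u ≫ w) = mid X B u ≫ w := by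
    intro X B B' u w
    apply serre_hom_ext sd
    intro v
    rw [mid_eval, sd.nat_right u w, sd.nat_right (mid X B u) w v, mid_eval]
    congr 1
    exact θuniq X B (w ≫ θ X B' v) (w ≫ v)
      (by rw [Category.assoc, θcomp])
  have natL' : ∀ {X X' : C} (B : D) (f : X' ⟶ X) (u : F.obj (G.obj X) ⟶ F.obj B),
      mid X' B (F.map (G.map f) ≫ u) = f ≫ mid X B u := by
    intro X X' B f u
    apply serre_hom_ext sd
    intro v
    rw [mid_eval, sd.nat_left (F.map (G.map f)) u, sd.nat_left f (mid X B u) v, mid_eval]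
    congr 1
    refine θuniq X B (θ X' B v ≫ (shiftFunctor C d).map (F.map (G.map f)))
      (v ≫ (shiftFunctor C d).map f) ?_
    rw [Category.assoc, hnat, ← Category.assoc, θcomp]
  refine ⟨Adjunction.mkOfHomEquiv
    { homEquiv := fun X B =>
        { toFun := fun φ => mid X B (F.map φ)
          invFun := fun g => ff.preimage ((mid X B).symm g)
          left_inv := fun φ => by
            dsimp only
            rw [Equiv.symm_apply_apply, ff.preimage_map]
          right_inv := fun g => by
            dsimp only
            rw [ff.map_preimage, Equiv.apply_symm_apply] }
      homEquiv_naturality_left_symm := ?_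
      homEquiv_naturality_right := ?_ }⟩
  · intro X' X B f g
    simp only [Equiv.coe_fn_symm_mk]
    apply ff.map_injective
    rw [ff.map_preimage, F.map_comp, ff.map_preimage]
    apply (mid X' B).injective
    rw [Equiv.apply_symm_apply, natL', Equiv.apply_symm_apply]
  · intro X B B' φ g
    simp only [Equiv.coe_fn_mk]
    rw [F.map_comp, natR']

end SplittingAux

end FlipAdjunction

section SecondTriangle

universe v v' v'' u u' u''

variable {C : Type u} {C' : Type u'} {C'' : Type u''}
  [Category.{v} C] [Category.{v'} C'] [Category.{v''} C'']
  [HasShift C ℤ] [HasShift C' ℤ] [HasShift C'' ℤ]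
  [Preadditive C] [Preadditive C'] [Preadditive C'']
  [HasZeroObject C] [HasZeroObject C'] [HasZeroObject C'']
  [∀ n : ℤ, (shiftFunctor C n).Additive] [∀ n : ℤ, (shiftFunctor C' n).Additive]
  [∀ n : ℤ, (shiftFunctor C'' n).Additive]
  [Pretriangulated C] [Pretriangulated C'] [Pretriangulated C'']

namespace SplittingAux

/-- Construction of the second recollement triangle from a left recollement together with
the two extra adjunctions `iPush ⊣ iStar` and `jStar ⊣ jShriek`. -/
lemma exists_second_triangle
    (iStar : C ⥤ C') (iPush : C' ⥤ C) (jShriek : C'' ⥤ C) (jStar : C ⥤ C'')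
    [iPush.Full] [iPush.Faithful] [jShriek.Full] [jShriek.Faithful]
    (tiStar : IsTriangleFunctor iStar) (tjStar : IsTriangleFunctor jStar)
    (adjI₁ : iStar ⊣ iPush) (adjJ₁ : jShriek ⊣ jStar)
    (adjI₂ : iPush ⊣ iStar) (adjJ₂ : jStar ⊣ jShriek)
    (hZ : ∀ X' : C', IsZero (jStar.obj (iPush.obj X')))
    (htri : ∀ X : C, ∃ h : iPush.obj (iStar.obj X) ⟶ (jShriek.obj (jStar.obj X))⟦(1 : ℤ)⟧,
      Triangle.mk (adjJ₁.counit.app X) (adjI₁.unit.app X) h ∈ distTriang C)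
    (X : C) :
    ∃ h : jShriek.obj (jStar.obj X) ⟶ (iPush.obj (iStar.obj X))⟦(1 : ℤ)⟧,
      Triangle.mk (adjI₂.counit.app X) (adjJ₂.unit.app X) h ∈ distTriang C := by
  obtain ⟨cI, hcI⟩ := tiStar
  obtain ⟨cQ, hcQ⟩ := tjStar
  letI := cI; letI := hcI; letI := cQ; letI := hcQ
  obtain ⟨Z, u, v, hT⟩ := Pretriangulated.distinguished_cocone_triangle (adjI₂.counit.app X)
  -- `iStar Z` is a zero object
  have hiso1 : IsIso (iStar.map (adjI₂.counit.app X)) := by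
    have h1 : adjI₂.unit.app (iStar.obj X) ≫ iStar.map (adjI₂.counit.app X) = 𝟙 _ :=
      adjI₂.right_triangle_components X
    have h2 : IsIso (adjI₂.unit.app (iStar.obj X) ≫ iStar.map (adjI₂.counit.app X)) := by
      rw [h1]; infer_instance
    exact IsIso.of_isIso_comp_left (adjI₂.unit.app (iStar.obj X)) _
  have hZ1 : IsZero (iStar.obj Z) := by
    have := Pretriangulated.Triangle.isZero₃_of_isIso₁ _
      (iStar.map_distinguished _ hT) (by exact hiso1)
    exact this
  -- hence `iPush (iStar Z)` is a zero object
  have hZ2 : IsZero (iPush.obj (iStar.obj Z)) := by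
    rw [IsZero.iff_id_eq_zero]
    calc 𝟙 (iPush.obj (iStar.obj Z))
        = iPush.map (iPush.preimage (𝟙 (iPush.obj (iStar.obj Z)))) :=
          (iPush.map_preimage _).symm
      _ = iPush.map (iPush.preimage 0) := by
          rw [hZ1.eq_of_src (iPush.preimage (𝟙 (iPush.obj (iStar.obj Z)))) (iPush.preimage 0)]
      _ = 0 := by rw [iPush.map_preimage]
  -- therefore the counit of the first adjunction is invertible at `Z`
  obtain ⟨h₀, hTZ⟩ := htri Z
  have hisocounitZ : IsIso (adjJ₁.counit.app Z) :=
    (Pretriangulated.Triangle.isZero₃_iff_isIso₁ _ hTZ).1 hZ2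
  -- `jStar u` is invertible
  have hisoju : IsIso (jStar.map u) := by
    have := (Pretriangulated.Triangle.isZero₁_iff_isIso₂ _
      (jStar.map_distinguished _ hT)).1 (by exact hZ (iStar.obj X))
    exact this
  -- the composition of the two canonical maps vanishes
  have hcomp : adjI₂.counit.app X ≫ adjJ₂.unit.app X = 0 := by
    apply (adjJ₂.homEquiv (iPush.obj (iStar.obj X)) (jStar.obj X)).symm.injective
    exact (hZ (iStar.obj X)).eq_of_src _ _
  -- factor the unit through the cone
  obtain ⟨w, hw₀⟩ := Pretriangulated.Triangle.yoneda_exact₂ _ hT (adjJ₂.unit.app X)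
    (by exact hcomp)
  change Z ⟶ jShriek.obj (jStar.obj X) at w
  have hw : adjJ₂.unit.app X = u ≫ w := hw₀
  clear hw₀
  -- `w` is an isomorphism
  have hisojη : IsIso (jStar.map (adjJ₂.unit.app X)) := by
    have h1 : jStar.map (adjJ₂.unit.app X) ≫ adjJ₂.counit.app (jStar.obj X) = 𝟙 _ :=
      adjJ₂.left_triangle_components X
    have h2 : IsIso (jStar.map (adjJ₂.unit.app X) ≫ adjJ₂.counit.app (jStar.obj X)) := by
      rw [h1]; infer_instance
    exact IsIso.of_isIso_comp_right _ (adjJ₂.counit.app (jStar.obj X))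
  have hisojw : IsIso (jStar.map w) := by
    have h3 : IsIso (jStar.map u ≫ jStar.map w) := by
      rw [← jStar.map_comp, ← hw]; exact hisojη
    exact IsIso.of_isIso_comp_left (jStar.map u) _
  have hisocounitJX : IsIso (adjJ₁.counit.app (jShriek.obj (jStar.obj X))) :=
    adjJ₁.isIso_counit_app_of_iso (Iso.refl _)
  have hisow : IsIso w := by
    have hnat : jShriek.map (jStar.map w) ≫ adjJ₁.counit.app (jShriek.obj (jStar.obj X))
        = adjJ₁.counit.app Z ≫ w := by
      simpa using adjJ₁.counit.naturality w
    have h5 : IsIso (adjJ₁.counit.app Z ≫ w) := by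
      rw [← hnat]; infer_instance
    exact IsIso.of_isIso_comp_left (adjJ₁.counit.app Z) w
  -- transport the triangle
  refine ⟨inv w ≫ v, ?_⟩
  refine Pretriangulated.isomorphic_distinguished _ hT _ ?_
  refine Triangle.isoMk _ _ (Iso.refl _) (Iso.refl _) (asIso w).symm ?_ ?_ ?_
  · dsimp; exact (Category.comp_id _).trans (Category.id_comp _).symm
  · dsimp
    rw [hw]
    exact (show (u ≫ w) ≫ inv w = u by simp).trans (Category.id_comp u).symm
  · dsimp
    exact (congrArg (fun g => (inv w ≫ v) ≫ g) (CategoryTheory.Functor.map_id _ _)).trans (Category.comp_id _)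
end SplittingAux

end SecondTriangle

section Statement

universe w v v' v'' u u' u''

variable (k : Type w) [Field k]
variable {C : Type u} {C' : Type u'} {C'' : Type u''}
  [Category.{v} C] [Category.{v'} C'] [Category.{v''} C'']
  [HasShift C ℤ] [HasShift C' ℤ] [HasShift C'' ℤ]
  [Preadditive C] [Preadditive C'] [Preadditive C'']
  [HasZeroObject C] [HasZeroObject C'] [HasZeroObject C'']
  [∀ n : ℤ, (shiftFunctor C n).Additive] [∀ n : ℤ, (shiftFunctor C' n).Additive]
  [∀ n : ℤ, (shiftFunctor C'' n).Additive]
  [Pretriangulated C] [Pretriangulated C'] [Pretriangulated C'']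
  [CategoryTheory.Linear k C] [CategoryTheory.Linear k C'] [CategoryTheory.Linear k C'']
  [∀ X Y : C, FiniteDimensional k (X ⟶ Y)]
  [∀ X Y : C', FiniteDimensional k (X ⟶ Y)]
  [∀ X Y : C'', FiniteDimensional k (X ⟶ Y)]

/-- A Hom-finite `k`-linear triangulated category is `d`-Calabi-Yau if the `d`-th shift
functor is a right Serre functor. -/
def IsCalabiYau (d : ℕ) : Prop :=
  Nonempty (RightSerreData k C (shiftFunctor C (d : ℤ)))

/-- **Remark 3.5 (i).** If `𝒞` is a `d`-Calabi-Yau triangulated category, then any left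
recollement of `𝒞` sits in a splitting recollement; in particular any recollement of `𝒞`
is splitting: `i^! ≅ i^*` and `j_* ≅ j_!`. -/
theorem left_recollement_of_calabi_yau_sits_in_splitting_recollement
    (d : ℕ) (hCY : IsCalabiYau k (C := C) d)
    (iStar : C ⥤ C') (iPush : C' ⥤ C) (jShriek : C'' ⥤ C) (jStar : C ⥤ C'')
    (tiStar : IsTriangleFunctor iStar) (tiPush : IsTriangleFunctor iPush)
    (tjShriek : IsTriangleFunctor jShriek) (tjStar : IsTriangleFunctor jStar)
    (hlrec : IsLeftRecollement iStar iPush jShriek jStar) :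
    (∃ (iShriek : C ⥤ C') (jPush : C'' ⥤ C),
      IsTriangleFunctor iShriek ∧ IsTriangleFunctor jPush ∧
      IsRecollement iStar iPush iShriek jShriek jStar jPush ∧
      Nonempty (iShriek ≅ iStar) ∧ Nonempty (jPush ≅ jShriek)) ∧
    (∀ (iShriek : C ⥤ C') (jPush : C'' ⥤ C),
      IsRecollement iStar iPush iShriek jShriek jStar jPush →
      Nonempty (iShriek ≅ iStar) ∧ Nonempty (jPush ≅ jShriek)) := by
  obtain ⟨sd⟩ := hCY
  obtain ⟨adjI₁, adjJ₁, hPf, hPfa, hJf, hJfa, hZ, htri⟩ := hlrec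
  haveI := hPf; haveI := hPfa; haveI := hJf; haveI := hJfa
  obtain ⟨cP, hcP⟩ := id tiPush
  letI := cP; letI := hcP
  obtain ⟨cJ, hcJ⟩ := id tjShriek
  letI := cJ; letI := hcJ
  obtain ⟨cQ2, hcQ2⟩ := id tjStar
  letI := cQ2; letI := hcQ2
  -- the reversed adjunction on the `i`-side
  obtain ⟨adjI₂⟩ := SplittingAux.flipAdjunctionLeft sd iStar iPush adjI₁
    (fun A => ⟨(shiftFunctor C' (d : ℤ)).obj A,
      ⟨((iPush.commShiftIso (d : ℤ)).app A).symm⟩⟩)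
  -- auxiliary bijectivity statements for the `j`-side
  have postcomp_bij : ∀ {P Q R : C} (c : Q ⟶ R) [IsIso c],
      Function.Bijective (fun t : P ⟶ Q => t ≫ c) := by
    intro P Q R c hc
    constructor
    · intro t₁ t₂ h
      simpa using congrArg (fun s => s ≫ inv c) h
    · intro s
      exact ⟨s ≫ inv c, by simp⟩
  have counit_bij : ∀ (B : C'') (Y : C),
      Function.Bijective
        (fun t : jShriek.obj B ⟶ jShriek.obj (jStar.obj Y) => t ≫ adjJ₁.counit.app Y) := by
    intro B Y
    constructor
    · intro t₁ t₂ h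
      have h1 : (adjJ₁.homEquiv B Y).symm (jShriek.preimage t₁)
          = (adjJ₁.homEquiv B Y).symm (jShriek.preimage t₂) := by
        rw [Adjunction.homEquiv_counit, Adjunction.homEquiv_counit,
          Functor.map_preimage, Functor.map_preimage]
        exact h
      have h2 := (adjJ₁.homEquiv B Y).symm.injective h1
      calc t₁ = jShriek.map (jShriek.preimage t₁) := (jShriek.map_preimage t₁).symm
        _ = jShriek.map (jShriek.preimage t₂) := by rw [h2]
        _ = t₂ := jShriek.map_preimage t₂
    · intro s
      refine ⟨jShriek.map (adjJ₁.homEquiv B Y s), ?_⟩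
      have hs := Adjunction.homEquiv_symm_apply adjJ₁ B Y (adjJ₁.homEquiv B Y s)
      show jShriek.map (adjJ₁.homEquiv B Y s) ≫ adjJ₁.counit.app Y = s
      rw [← hs, Equiv.symm_apply_apply]
  -- the reversed adjunction on the `j`-side
  obtain ⟨adjJ₂⟩ := SplittingAux.flipAdjunctionRight sd jShriek jStar adjJ₁
    (fun X => (jShriek.commShiftIso (d : ℤ)).inv.app (jStar.obj X) ≫
      jShriek.map ((jStar.commShiftIso (d : ℤ)).inv.app X) ≫
      adjJ₁.counit.app ((shiftFunctor C (d : ℤ)).obj X))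
    (by
      intro X' X f
      have h1 := (jShriek.commShiftIso (d : ℤ)).inv.naturality (jStar.map f)
      dsimp only [Functor.comp_map] at h1
      have h2 := (jStar.commShiftIso (d : ℤ)).inv.naturality f
      dsimp only [Functor.comp_map] at h2
      have h3 := adjJ₁.counit.naturality ((shiftFunctor C (d : ℤ)).map f)
      dsimp only [Functor.comp_map, Functor.id_map] at h3
      simp only [Category.assoc]
      rw [← Category.assoc, h1, Category.assoc]
      congr 1
      rw [← Functor.map_comp_assoc, h2, Functor.map_comp_assoc, h3])
    (by
      intro B X
      have hc : (fun t : jShriek.obj B ⟶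
          (shiftFunctor C (d : ℤ)).obj (jShriek.obj (jStar.obj X)) =>
            t ≫ ((jShriek.commShiftIso (d : ℤ)).inv.app (jStar.obj X) ≫
              jShriek.map ((jStar.commShiftIso (d : ℤ)).inv.app X) ≫
              adjJ₁.counit.app ((shiftFunctor C (d : ℤ)).obj X)))
          = (fun r : jShriek.obj B ⟶ jShriek.obj (jStar.obj ((shiftFunctor C (d : ℤ)).obj X)) =>
              r ≫ adjJ₁.counit.app ((shiftFunctor C (d : ℤ)).obj X)) ∘
            (fun s : jShriek.obj B ⟶ jShriek.obj ((shiftFunctor C'' (d : ℤ)).obj (jStar.obj X)) =>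
              s ≫ jShriek.map ((jStar.commShiftIso (d : ℤ)).inv.app X)) ∘
            (fun t => t ≫ (jShriek.commShiftIso (d : ℤ)).inv.app (jStar.obj X)) := by
        funext t
        simp [Category.assoc]
      rw [hc]
      exact (counit_bij _ _).comp ((postcomp_bij _).comp (postcomp_bij _)))
  -- the second recollement triangle
  have htri2 := fun X => SplittingAux.exists_second_triangle iStar iPush jShriek jStar
    tiStar tjStar adjI₁ adjJ₁ adjI₂ adjJ₂ hZ htri X
  constructor
  · exact ⟨iStar, jShriek, tiStar, tjShriek,
      ⟨adjI₁, adjI₂, adjJ₁, adjJ₂, hPf, hPfa, hJf, hJfa, hJf, hJfa, hZ, htri, htri2⟩,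
      ⟨Iso.refl _⟩, ⟨Iso.refl _⟩⟩
  · intro iShriek' jPush' hrec
    obtain ⟨_, adjI₂', _, adjJ₂', _⟩ := hrec
    exact ⟨⟨Adjunction.rightAdjointUniq adjI₂' adjI₂⟩,
      ⟨Adjunction.rightAdjointUniq adjJ₂' adjJ₂⟩⟩

end Statement
end

section
/- Let i^*: 𝒞 → 𝒞′, i_*: 𝒞′ → 𝒞, j_!: 𝒞″ → 𝒞, j^*: 𝒞 → 𝒞″ be triangle functors between triangulated categories. The following are equivalent: (i) these functors form a left recollement of 𝒞 relative to 𝒞′ and 𝒞″; (ii) (i^*, i_*) and (j_!, j^*) are adjoint pairs, i_* and j_! are fully faithful, and Im i_* = Ker j^*; (iii) (i^*, i_*) and (j_!, j^*) are adjoint pairs, i_* and j_! are fully faithful, and Im j_! = Ker i^*. -/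
/-!
STATEMENT 15: Let i^*: 𝒞 → 𝒞′, i_*: 𝒞′ → 𝒞, j_!: 𝒞″ → 𝒞, j^*: 𝒞 → 𝒞″ be triangle functors
between triangulated categories. The following are equivalent: (i) these functors form a
left recollement of 𝒞 relative to 𝒞′ and 𝒞″; (ii) (i^*, i_*) and (j_!, j^*) are adjoint
pairs, i_* and j_! are fully faithful, and Im i_* = Ker j^*; (iii) (i^*, i_*) and
(j_!, j^*) are adjoint pairs, i_* and j_! are fully faithful, and Im j_! = Ker i^*.
-/
open CategoryTheory CategoryTheory.Limits CategoryTheory.Pretriangulated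

section Statement

universe v v' v'' u u' u''

variable {C : Type u} {C' : Type u'} {C'' : Type u''}
  [Category.{v} C] [Category.{v'} C'] [Category.{v''} C'']
  [HasShift C ℤ] [HasShift C' ℤ] [HasShift C'' ℤ]
  [Preadditive C] [Preadditive C'] [Preadditive C'']
  [HasZeroObject C] [HasZeroObject C'] [HasZeroObject C'']
  [∀ n : ℤ, (shiftFunctor C n).Additive] [∀ n : ℤ, (shiftFunctor C' n).Additive]
  [∀ n : ℤ, (shiftFunctor C'' n).Additive]
  [Pretriangulated C] [Pretriangulated C'] [Pretriangulated C'']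

section Helpers

lemma precomp_bijective_aux {T : Triangle C} (hT : T ∈ distTriang C) {M : C}
    (h0 : ∀ f : T.obj₁ ⟶ M, f = 0) (h1 : ∀ f : T.obj₁⟦(1 : ℤ)⟧ ⟶ M, f = 0) :
    Function.Bijective (fun u : T.obj₃ ⟶ M => T.mor₂ ≫ u) := by
  constructor
  · intro u v huv
    replace huv : T.mor₂ ≫ u = T.mor₂ ≫ v := huv
    have h2 : T.mor₂ ≫ (u - v) = 0 := by
      rw [Preadditive.comp_sub, huv, sub_self]
    obtain ⟨w, hw⟩ := Triangle.yoneda_exact₃ T hT (u - v) h2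
    rw [h1 w, comp_zero] at hw
    exact sub_eq_zero.1 hw
  · intro w
    obtain ⟨u, hu⟩ := Triangle.yoneda_exact₂ T hT w (h0 _)
    exact ⟨u, hu.symm⟩

lemma postcomp_bijective_aux {T : Triangle C} (hT : T ∈ distTriang C) {M : C}
    (h0 : ∀ f : M ⟶ T.obj₃, f = 0) (h1 : ∀ f : M ⟶ T.obj₃⟦(-1 : ℤ)⟧, f = 0) :
    Function.Bijective (fun u : M ⟶ T.obj₁ => u ≫ T.mor₁) := by
  constructor
  · intro u v huv
    replace huv : u ≫ T.mor₁ = v ≫ T.mor₁ := huv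
    have h2 : (u - v) ≫ T.mor₁ = 0 := by
      rw [Preadditive.sub_comp, huv, sub_self]
    obtain ⟨w, hw⟩ := Triangle.coyoneda_exact₂ _ (inv_rot_of_distTriang T hT) (u - v) h2
    rw [h1 w] at hw; replace hw := hw.trans zero_comp
    exact sub_eq_zero.1 hw
  · intro w
    obtain ⟨u, hu⟩ := Triangle.coyoneda_exact₂ T hT w (h0 _)
    exact ⟨u, hu.symm⟩

end Helpers

section Aux

variable (iStar : C ⥤ C') (iPush : C' ⥤ C) (jShriek : C'' ⥤ C) (jStar : C ⥤ C'')
  [iStar.CommShift ℤ] [iStar.IsTriangulated] [iPush.CommShift ℤ] [iPush.IsTriangulated]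
  [jShriek.CommShift ℤ] [jShriek.IsTriangulated] [jStar.CommShift ℤ] [jStar.IsTriangulated]

/-- From a left recollement: `Im i_* = Ker j^*`. -/
lemma leftRec_im_eq_ker_jStar (h : IsLeftRecollement iStar iPush jShriek jStar) :
    iPush.essImage = kerSet jStar := by
  obtain ⟨adjI, adjJ, h1, h2, h3, h4, hz, htri⟩ := h
  apply Set.ext; intro X
  constructor
  · rintro ⟨W, ⟨e⟩⟩
    exact (hz W).of_iso (jStar.mapIso e).symm
  · intro hX
    have hX' : IsZero (jStar.obj X) := hX
    obtain ⟨hmap, ht⟩ := htri X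
    have hz1 : IsZero ((Triangle.mk (adjJ.counit.app X) (adjI.unit.app X) hmap).obj₁) :=
      jShriek.map_isZero hX'
    have : IsIso (adjI.unit.app X) := (Triangle.isZero₁_iff_isIso₂ _ ht).1 hz1
    exact ⟨iStar.obj X, ⟨(asIso (adjI.unit.app X)).symm⟩⟩

/-- From a left recollement: `Im j_! = Ker i^*`. -/
lemma leftRec_im_eq_ker_iStar (h : IsLeftRecollement iStar iPush jShriek jStar) :
    jShriek.essImage = kerSet iStar := by
  obtain ⟨adjI, adjJ, h1, h2, h3, h4, hz, htri⟩ := h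
  haveI := h1; haveI := h2; haveI := h3; haveI := h4
  apply Set.ext; intro X
  constructor
  · rintro ⟨A, ⟨e⟩⟩
    obtain ⟨hmap, ht⟩ := htri X
    have : IsIso (adjJ.counit.app X) := adjJ.isIso_counit_app_of_iso e.symm
    have hz3 := Triangle.isZero₃_of_isIso₁ _ ht this
    have hz3' : IsZero (iPush.obj (iStar.obj X)) := hz3
    show IsZero (iStar.obj X)
    rw [IsZero.iff_id_eq_zero] at hz3' ⊢
    apply iPush.map_injective
    rw [iPush.map_id, iPush.map_zero]
    exact hz3'
  · intro hX
    have hX' : IsZero (iStar.obj X) := hX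
    obtain ⟨hmap, ht⟩ := htri X
    have h3 : IsZero ((Triangle.mk (adjJ.counit.app X) (adjI.unit.app X) hmap).obj₃) :=
      iPush.map_isZero hX'
    have : IsIso (adjJ.counit.app X) := (Triangle.isZero₃_iff_isIso₁ _ ht).1 h3
    exact ⟨jStar.obj X, ⟨asIso (adjJ.counit.app X)⟩⟩

/-- From `Im i_* = Ker j^*` to a left recollement. -/
lemma leftRec_of_im_eq_ker_jStar (adjI : iStar ⊣ iPush) (adjJ : jShriek ⊣ jStar)
    [iPush.Full] [iPush.Faithful] [jShriek.Full] [jShriek.Faithful]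
    (hIm : iPush.essImage = kerSet jStar) :
    IsLeftRecollement iStar iPush jShriek jStar := by
  have hz : ∀ W : C', IsZero (jStar.obj (iPush.obj W)) := fun W => by
    have h0 : iPush.essImage (iPush.obj W) := iPush.obj_mem_essImage W
    rw [hIm] at h0; exact h0
  have hvan : ∀ (A : C'') (W : C') (f : jShriek.obj A ⟶ iPush.obj W), f = 0 := by
    intro A W f
    apply (adjJ.homEquiv A (iPush.obj W)).injective
    exact (hz W).eq_of_tgt _ _
  have hvan1 : ∀ (A : C'') (W : C') (f : (jShriek.obj A)⟦(1 : ℤ)⟧ ⟶ iPush.obj W), f = 0 := by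
    intro A W f
    rw [← cancel_epi ((jShriek.commShiftIso (1 : ℤ)).hom.app A), comp_zero]
    exact hvan _ _ _
  refine ⟨adjI, adjJ, inferInstance, inferInstance, inferInstance, inferInstance, hz,
    fun X => ?_⟩
  obtain ⟨Z, g, hmor, hT⟩ := distinguished_cocone_triangle (adjJ.counit.app X)
  have hiso : IsIso (jStar.map (adjJ.counit.app X)) := inferInstance
  have hZzero : IsZero (jStar.obj Z) :=
    Triangle.isZero₃_of_isIso₁ _
      (jStar.map_distinguished _ hT) (by dsimp; exact hiso)
  have hZim : iPush.essImage Z := by rw [hIm]; exact hZzero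
  obtain ⟨W, ⟨eW⟩⟩ := hZim
  have bijg : ∀ W' : C', Function.Bijective (fun u : Z ⟶ iPush.obj W' => g ≫ u) := fun W' =>
    precomp_bijective_aux hT (hvan (jStar.obj X) W') (hvan1 (jStar.obj X) W')
  have bijη : ∀ W' : C', Function.Bijective
      (fun u : iPush.obj (iStar.obj X) ⟶ iPush.obj W' => adjI.unit.app X ≫ u) := by
    intro W'
    constructor
    · intro u v huv
      obtain ⟨u', rfl⟩ := iPush.map_surjective u
      obtain ⟨v', rfl⟩ := iPush.map_surjective v
      have h5 : adjI.homEquiv X W' u' = adjI.homEquiv X W' v' := by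
        rw [Adjunction.homEquiv_unit, Adjunction.homEquiv_unit]
        exact huv
      rw [(adjI.homEquiv X W').injective h5]
    · intro w
      refine ⟨iPush.map ((adjI.homEquiv X W').symm w), ?_⟩
      have h7 := (adjI.homEquiv X W').apply_symm_apply w
      rw [Adjunction.homEquiv_unit] at h7
      exact h7
  obtain ⟨α, hα⟩ := (bijg (iStar.obj X)).2 (adjI.unit.app X)
  replace hα : g ≫ α = adjI.unit.app X := hα
  obtain ⟨β', hβ'⟩ := (bijη W).2 (g ≫ eW.inv)
  replace hβ' : adjI.unit.app X ≫ β' = g ≫ eW.inv := hβ'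
  have hβ : adjI.unit.app X ≫ β' ≫ eW.hom = g := by
    rw [← Category.assoc, hβ', Category.assoc, eW.inv_hom_id, Category.comp_id]
  have hαβ : α ≫ β' ≫ eW.hom = 𝟙 Z := by
    have h6 : g ≫ (α ≫ β' ≫ eW.hom) ≫ eW.inv = g ≫ 𝟙 Z ≫ eW.inv := by
      rw [Category.id_comp]
      simp only [← Category.assoc, hα]
      simp only [Category.assoc, eW.hom_inv_id, Category.comp_id]
      exact hβ'
    have := (bijg W).1 h6
    rw [← cancel_mono eW.inv]
    simpa using this
  have hβα : (β' ≫ eW.hom) ≫ α = 𝟙 _ := by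
    apply (bijη (iStar.obj X)).1
    show adjI.unit.app X ≫ (β' ≫ eW.hom) ≫ α = adjI.unit.app X ≫ 𝟙 _
    rw [Category.comp_id, ← Category.assoc, hβ, hα]
  refine ⟨(β' ≫ eW.hom) ≫ hmor, ?_⟩
  refine isomorphic_distinguished _ hT _ ?_
  refine Triangle.isoMk _ _ (Iso.refl _) (Iso.refl _)
    ⟨β' ≫ eW.hom, α, hβα, hαβ⟩ ?_ ?_ ?_
  · exact (Category.comp_id _).trans (Category.id_comp _).symm
  · exact hβ.trans (Category.id_comp _).symm
  · simp
    exact (congrArg (fun t => (β' ≫ eW.hom ≫ hmor) ≫ t) ((shiftFunctor C (1 : ℤ)).map_id _)).trans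
      ((Category.comp_id (β' ≫ eW.hom ≫ hmor)).trans (Category.assoc β' eW.hom hmor).symm)

/-- From `Im j_! = Ker i^*` to a left recollement. -/
lemma leftRec_of_im_eq_ker_iStar (adjI : iStar ⊣ iPush) (adjJ : jShriek ⊣ jStar)
    [iPush.Full] [iPush.Faithful] [jShriek.Full] [jShriek.Faithful]
    (hIm : jShriek.essImage = kerSet iStar) :
    IsLeftRecollement iStar iPush jShriek jStar := by
  have hzj : ∀ A : C'', IsZero (iStar.obj (jShriek.obj A)) := fun A => by
    have h0 : jShriek.essImage (jShriek.obj A) := jShriek.obj_mem_essImage A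
    rw [hIm] at h0; exact h0
  have hvan : ∀ (A : C'') (W : C') (f : jShriek.obj A ⟶ iPush.obj W), f = 0 := by
    intro A W f
    apply (adjI.homEquiv (jShriek.obj A) W).symm.injective
    exact (hzj A).eq_of_src _ _
  have hz : ∀ W : C', IsZero (jStar.obj (iPush.obj W)) := by
    intro W
    rw [IsZero.iff_id_eq_zero]
    apply (adjJ.homEquiv (jStar.obj (iPush.obj W)) (iPush.obj W)).symm.injective
    exact (hvan _ _ _).trans (hvan _ _ _).symm
  have hvan1 : ∀ (A : C'') (W : C') (f : jShriek.obj A ⟶ (iPush.obj W)⟦(-1 : ℤ)⟧), f = 0 := by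
    intro A W f
    rw [← cancel_mono ((iPush.commShiftIso (-1 : ℤ)).inv.app W), zero_comp]
    exact hvan _ _ _
  refine ⟨adjI, adjJ, inferInstance, inferInstance, inferInstance, inferInstance, hz,
    fun X => ?_⟩
  obtain ⟨V, g, hmor, hT⟩ := distinguished_cocone_triangle (adjI.unit.app X)
  have hS := inv_rot_of_distTriang _ hT
  set S := (Triangle.mk (adjI.unit.app X) g hmor).invRotate with hSdef
  haveI hiso : IsIso (iStar.map (adjI.unit.app X)) := inferInstance
  have hVzero : IsZero (iStar.obj (V⟦(-1 : ℤ)⟧)) :=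
    Triangle.isZero₁_of_isIso₂ _ (iStar.map_distinguished S hS)
      (by exact hiso)
  have hVim : jShriek.essImage (V⟦(-1 : ℤ)⟧) := by rw [hIm]; exact hVzero
  obtain ⟨A, ⟨eA⟩⟩ := hVim
  have bijm : ∀ A' : C'',
      Function.Bijective (fun u : jShriek.obj A' ⟶ (V⟦(-1 : ℤ)⟧) => u ≫ S.mor₁) := fun A' =>
    postcomp_bijective_aux hS (hvan A' (iStar.obj X)) (hvan1 A' (iStar.obj X))
  have bijε : ∀ A' : C'', Function.Bijective
      (fun u : jShriek.obj A' ⟶ jShriek.obj (jStar.obj X) => u ≫ adjJ.counit.app X) := by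
    intro A'
    constructor
    · intro u v huv
      obtain ⟨u', rfl⟩ := jShriek.map_surjective u
      obtain ⟨v', rfl⟩ := jShriek.map_surjective v
      have h5 : (adjJ.homEquiv A' X).symm u' = (adjJ.homEquiv A' X).symm v' := by
        rw [Adjunction.homEquiv_counit, Adjunction.homEquiv_counit]
        exact huv
      rw [(adjJ.homEquiv A' X).symm.injective h5]
    · intro w
      refine ⟨jShriek.map (adjJ.homEquiv A' X w), ?_⟩
      have h7 := (adjJ.homEquiv A' X).symm_apply_apply w
      rw [Adjunction.homEquiv_counit] at h7
      exact h7
  obtain ⟨α, hα⟩ := (bijm (jStar.obj X)).2 (adjJ.counit.app X)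
  replace hα : α ≫ S.mor₁ = adjJ.counit.app X := hα
  obtain ⟨β', hβ'⟩ := (bijε A).2 (eA.hom ≫ S.mor₁)
  replace hβ' : β' ≫ adjJ.counit.app X = eA.hom ≫ S.mor₁ := hβ'
  have hβ : (eA.inv ≫ β') ≫ adjJ.counit.app X = S.mor₁ := by
    rw [Category.assoc, hβ']; exact eA.inv_hom_id_assoc _
  have hαβ : α ≫ eA.inv ≫ β' = 𝟙 _ := by
    apply (bijε (jStar.obj X)).1
    show (α ≫ eA.inv ≫ β') ≫ adjJ.counit.app X = 𝟙 _ ≫ adjJ.counit.app X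
    rw [Category.id_comp, Category.assoc, hβ]; exact hα
  have hβα : (eA.inv ≫ β') ≫ α = 𝟙 S.obj₁ := by
    have h2 : eA.hom ≫ (eA.inv ≫ β') ≫ α = eA.hom ≫ 𝟙 _ := by
      apply (bijm A).1
      show (eA.hom ≫ (eA.inv ≫ β') ≫ α) ≫ S.mor₁ = (eA.hom ≫ 𝟙 _) ≫ S.mor₁
      rw [Category.comp_id]
      simp only [Category.assoc, hα, eA.hom_inv_id_assoc]
      exact (Category.assoc _ _ _).trans ((congrArg (fun t => β' ≫ t) hα).trans hβ')
    exact (cancel_epi eA.hom).1 h2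
  refine ⟨S.mor₃ ≫ (eA.inv ≫ β')⟦(1 : ℤ)⟧', ?_⟩
  refine isomorphic_distinguished _ hS _ ?_
  refine Triangle.isoMk _ _ ⟨α, eA.inv ≫ β', hαβ, hβα⟩ (Iso.refl _) (Iso.refl _) ?_ ?_ ?_
  · exact (Category.comp_id _).trans hα.symm
  · show adjI.unit.app X ≫ 𝟙 _ = 𝟙 _ ≫ S.mor₂
    simp only [Category.comp_id, Category.id_comp]
    rfl
  · dsimp
    exact (Category.assoc _ _ _).trans ((congrArg (fun t => S.mor₃ ≫ t)
      (((shiftFunctor C (1 : ℤ)).map_comp _ _).symm.trans ((congrArg _ hβα).trans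
        ((shiftFunctor C (1 : ℤ)).map_id _)))).trans
      ((Category.comp_id _).trans (Category.id_comp _).symm))

end Aux

/-- **Lemma 1.1 (1).** For triangle functors `i^* : 𝒞 ⥤ 𝒞'`, `i_* : 𝒞' ⥤ 𝒞`,
`j_! : 𝒞'' ⥤ 𝒞`, `j^* : 𝒞 ⥤ 𝒞''`, the following are equivalent: (i) they form a left
recollement; (ii) `(i^*, i_*)` and `(j_!, j^*)` are adjoint pairs, `i_*`, `j_!` are fully
faithful and `Im i_* = Ker j^*`; (iii) `(i^*, i_*)` and `(j_!, j^*)` are adjoint pairs,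
`i_*`, `j_!` are fully faithful and `Im j_! = Ker i^*`. -/
theorem isLeftRecollement_iff_im_eq_ker
    (iStar : C ⥤ C') (iPush : C' ⥤ C) (jShriek : C'' ⥤ C) (jStar : C ⥤ C'')
    [iStar.CommShift ℤ] [iStar.IsTriangulated] [iPush.CommShift ℤ] [iPush.IsTriangulated]
    [jShriek.CommShift ℤ] [jShriek.IsTriangulated] [jStar.CommShift ℤ]
    [jStar.IsTriangulated] :
    (IsLeftRecollement iStar iPush jShriek jStar ↔
      (Nonempty (iStar ⊣ iPush) ∧ Nonempty (jShriek ⊣ jStar) ∧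
        iPush.Full ∧ iPush.Faithful ∧ jShriek.Full ∧ jShriek.Faithful ∧
        iPush.essImage = kerSet jStar)) ∧
    (IsLeftRecollement iStar iPush jShriek jStar ↔
      (Nonempty (iStar ⊣ iPush) ∧ Nonempty (jShriek ⊣ jStar) ∧
        iPush.Full ∧ iPush.Faithful ∧ jShriek.Full ∧ jShriek.Faithful ∧
        jShriek.essImage = kerSet iStar)) := by
  constructor
  · constructor
    · intro h
      obtain ⟨adjI, adjJ, h1, h2, h3, h4, -, -⟩ := id h
      exact ⟨⟨adjI⟩, ⟨adjJ⟩, h1, h2, h3, h4,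
        leftRec_im_eq_ker_jStar iStar iPush jShriek jStar h⟩
    · rintro ⟨⟨adjI⟩, ⟨adjJ⟩, h1, h2, h3, h4, hIm⟩
      haveI := h1; haveI := h2; haveI := h3; haveI := h4
      exact leftRec_of_im_eq_ker_jStar iStar iPush jShriek jStar adjI adjJ hIm
  · constructor
    · intro h
      obtain ⟨adjI, adjJ, h1, h2, h3, h4, -, -⟩ := id h
      exact ⟨⟨adjI⟩, ⟨adjJ⟩, h1, h2, h3, h4,
        leftRec_im_eq_ker_iStar iStar iPush jShriek jStar h⟩
    · rintro ⟨⟨adjI⟩, ⟨adjJ⟩, h1, h2, h3, h4, hIm⟩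
      haveI := h1; haveI := h2; haveI := h3; haveI := h4
      exact leftRec_of_im_eq_ker_iStar iStar iPush jShriek jStar adjI adjJ hIm

end Statement
end

section
/- Let (𝒞′, 𝒞, 𝒞″, i^*, i_*, i^!, j_!, j^*, j_*) and (𝒟′, 𝒟, 𝒟″, i_𝒟^*, i_*^𝒟, i_𝒟^!, j_!^𝒟, j_𝒟^*, j_*^𝒟) be recollements of triangulated categories. The following are equivalent: (i) the two recollements are equivalent; (ii) there is a triangle-equivalence F: 𝒞 → 𝒟 such that F(Im j_!) = Im j_!^𝒟, F(Im i_*) = Im i_*^𝒟 and F(Im j_*) = Im j_*^𝒟; (iii) there is a triangle-equivalence F: 𝒞 → 𝒟 such that at least one of the three equalities in (ii) holds. -/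
/-!
STATEMENT 17: Let (𝒞′, 𝒞, 𝒞″, …) and (𝒟′, 𝒟, 𝒟″, …) be recollements of triangulated
categories. TFAE: (i) the two recollements are equivalent; (ii) there is a
triangle-equivalence F: 𝒞 → 𝒟 such that F(Im j_!) = Im j_!^𝒟, F(Im i_*) = Im i_*^𝒟 and
F(Im j_*) = Im j_*^𝒟; (iii) there is a triangle-equivalence F: 𝒞 → 𝒟 such that at least
one of the three equalities in (ii) holds.
-/
open CategoryTheory CategoryTheory.Limits CategoryTheory.Pretriangulated

section RecollementEquivalences

variable {C₁ C₁' C₁'' C₂ C₂' C₂'' : Type*}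
  [Category C₁] [Category C₁'] [Category C₁''] [Category C₂] [Category C₂'] [Category C₂'']
  [HasShift C₁ ℤ] [HasShift C₁' ℤ] [HasShift C₁'' ℤ]
  [HasShift C₂ ℤ] [HasShift C₂' ℤ] [HasShift C₂'' ℤ]
  [Preadditive C₁] [Preadditive C₁'] [Preadditive C₁'']
  [Preadditive C₂] [Preadditive C₂'] [Preadditive C₂'']
  [HasZeroObject C₁] [HasZeroObject C₁'] [HasZeroObject C₁'']
  [HasZeroObject C₂] [HasZeroObject C₂'] [HasZeroObject C₂'']
  [∀ n : ℤ, (shiftFunctor C₁ n).Additive] [∀ n : ℤ, (shiftFunctor C₁' n).Additive]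
  [∀ n : ℤ, (shiftFunctor C₁'' n).Additive]
  [∀ n : ℤ, (shiftFunctor C₂ n).Additive] [∀ n : ℤ, (shiftFunctor C₂' n).Additive]
  [∀ n : ℤ, (shiftFunctor C₂'' n).Additive]
  [Pretriangulated C₁] [Pretriangulated C₁'] [Pretriangulated C₁'']
  [Pretriangulated C₂] [Pretriangulated C₂'] [Pretriangulated C₂'']

/-- An equivalence of left recollements: a triple `(F', F, F'')` of triangle-equivalences
commuting with the four functors up to natural isomorphism. -/
def IsLeftRecollementEquiv (F' : C₁' ⥤ C₂') (F : C₁ ⥤ C₂) (F'' : C₁'' ⥤ C₂'')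
    (iStar₁ : C₁ ⥤ C₁') (iPush₁ : C₁' ⥤ C₁) (jShriek₁ : C₁'' ⥤ C₁) (jStar₁ : C₁ ⥤ C₁'')
    (iStar₂ : C₂ ⥤ C₂') (iPush₂ : C₂' ⥤ C₂) (jShriek₂ : C₂'' ⥤ C₂) (jStar₂ : C₂ ⥤ C₂'') :
    Prop :=
  F'.IsEquivalence ∧ F.IsEquivalence ∧ F''.IsEquivalence ∧
  IsTriangleFunctor F' ∧ IsTriangleFunctor F ∧ IsTriangleFunctor F'' ∧
  Nonempty (iStar₁ ⋙ F' ≅ F ⋙ iStar₂) ∧ Nonempty (iPush₁ ⋙ F ≅ F' ⋙ iPush₂) ∧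
  Nonempty (jShriek₁ ⋙ F ≅ F'' ⋙ jShriek₂) ∧ Nonempty (jStar₁ ⋙ F'' ≅ F ⋙ jStar₂)

/-- An equivalence of recollements: a triple `(F', F, F'')` of triangle-equivalences
commuting with the six functors up to natural isomorphism. -/
def IsRecollementEquiv (F' : C₁' ⥤ C₂') (F : C₁ ⥤ C₂) (F'' : C₁'' ⥤ C₂'')
    (iStar₁ : C₁ ⥤ C₁') (iPush₁ : C₁' ⥤ C₁) (iShriek₁ : C₁ ⥤ C₁')
    (jShriek₁ : C₁'' ⥤ C₁) (jStar₁ : C₁ ⥤ C₁'') (jPush₁ : C₁'' ⥤ C₁)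
    (iStar₂ : C₂ ⥤ C₂') (iPush₂ : C₂' ⥤ C₂) (iShriek₂ : C₂ ⥤ C₂')
    (jShriek₂ : C₂'' ⥤ C₂) (jStar₂ : C₂ ⥤ C₂'') (jPush₂ : C₂'' ⥤ C₂) : Prop :=
  F'.IsEquivalence ∧ F.IsEquivalence ∧ F''.IsEquivalence ∧
  IsTriangleFunctor F' ∧ IsTriangleFunctor F ∧ IsTriangleFunctor F'' ∧
  Nonempty (iStar₁ ⋙ F' ≅ F ⋙ iStar₂) ∧ Nonempty (iPush₁ ⋙ F ≅ F' ⋙ iPush₂) ∧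
  Nonempty (iShriek₁ ⋙ F' ≅ F ⋙ iShriek₂) ∧
  Nonempty (jShriek₁ ⋙ F ≅ F'' ⋙ jShriek₂) ∧ Nonempty (jStar₁ ⋙ F'' ≅ F ⋙ jStar₂) ∧
  Nonempty (jPush₁ ⋙ F ≅ F'' ⋙ jPush₂)

end RecollementEquivalences

section LadderPeriod

variable {C C' C'' : Type*}
  [Category C] [Category C'] [Category C'']
  [HasShift C ℤ] [HasShift C' ℤ] [HasShift C'' ℤ]
  [Preadditive C] [Preadditive C'] [Preadditive C'']
  [HasZeroObject C] [HasZeroObject C'] [HasZeroObject C'']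
  [∀ n : ℤ, (shiftFunctor C n).Additive] [∀ n : ℤ, (shiftFunctor C' n).Additive]
  [∀ n : ℤ, (shiftFunctor C'' n).Additive]
  [Pretriangulated C] [Pretriangulated C'] [Pretriangulated C'']

/-- In a ladder, the `s`-th left recollement is equivalent to the `t`-th one. -/
def LadderLeftRecEquivAt (a : ℤ → C' ⥤ C) (b : ℤ → C'' ⥤ C)
    (p : ℤ → C ⥤ C') (q : ℤ → C ⥤ C'') (s t : ℤ) : Prop :=
  ∃ (F' : C' ⥤ C') (F : C ⥤ C) (F'' : C'' ⥤ C''),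
    IsLeftRecollementEquiv F' F F'' (p s) (a s) (b s) (q s) (p t) (a t) (b t) (q t)

/-- An unbounded ladder is periodic of period `t`: `t` is the minimal positive integer such
that the `t`-th left recollement is equivalent to the `0`-th one. -/
def LadderHasPeriod (a : ℤ → C' ⥤ C) (b : ℤ → C'' ⥤ C)
    (p : ℤ → C ⥤ C') (q : ℤ → C ⥤ C'') (t : ℤ) : Prop :=
  0 < t ∧ LadderLeftRecEquivAt a b p q t 0 ∧
    ∀ s : ℤ, 0 < s → s < t → ¬ LadderLeftRecEquivAt a b p q s 0

/-- The recollement `(i^*, i_*, i^!, j_!, j^*, j_*)` sits in an unbounded ladder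
of period `t`. -/
def SitsInUnboundedLadderOfPeriod (iStar : C ⥤ C') (iPush : C' ⥤ C) (iShriek : C ⥤ C')
    (jShriek : C'' ⥤ C) (jStar : C ⥤ C'') (jPush : C'' ⥤ C) (t : ℤ) : Prop :=
  ∃ (a : ℤ → C' ⥤ C) (b : ℤ → C'' ⥤ C) (p : ℤ → C ⥤ C') (q : ℤ → C ⥤ C''),
    IsUnboundedLadder a b p q ∧
    p 0 = iStar ∧ a 0 = iPush ∧ p 1 = iShriek ∧
    b 0 = jShriek ∧ q 0 = jStar ∧ b 1 = jPush ∧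
    LadderHasPeriod a b p q t

end LadderPeriod
namespace RecollementProofAux

open CategoryTheory CategoryTheory.Limits CategoryTheory.Pretriangulated

section Perp

variable {A : Type*} [Category A]

/-- Right perpendicular class of a class of objects. -/
def RP (S : Set A) : Set A := {Y | ∀ X ∈ S, Subsingleton (X ⟶ Y)}

/-- Left perpendicular class of a class of objects. -/
def LP (S : Set A) : Set A := {Y | ∀ X ∈ S, Subsingleton (Y ⟶ X)}

lemma subs_congr {X X' Y Y' : A} (e : X ≅ X') (e' : Y ≅ Y')
    (h : Subsingleton (X' ⟶ Y')) : Subsingleton (X ⟶ Y) :=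
  haveI := h
  (Iso.homCongr e e').subsingleton

end Perp

section Zero

variable {A : Type*} {B : Type*} [Category A] [Category B]

lemma isZero_of_end_subsingleton [Preadditive A] {X : A}
    (h : Subsingleton (X ⟶ X)) : IsZero X := by
  rw [IsZero.iff_id_eq_zero]
  exact @Subsingleton.elim _ h _ _

lemma isZero_leftAdj [Preadditive A] [Preadditive B] {L : A ⥤ B} {R : B ⥤ A}
    (adj : L ⊣ R) {Z : A} (hZ : IsZero Z) : IsZero (L.obj Z) := by
  rw [IsZero.iff_id_eq_zero]
  apply (adj.homEquiv Z (L.obj Z)).injective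
  exact hZ.eq_of_src _ _

end Zero

section Transfer

variable {A B E₁ E₂ : Type*} [Category A] [Category B] [Category E₁] [Category E₂]

lemma mem_comp_essImage_iff (F : A ⥤ B) [F.Full] [F.Faithful] (G : E₁ ⥤ A)
    {Y₀ : A} {Y : B} (eY : F.obj Y₀ ≅ Y) :
    (G ⋙ F).essImage Y ↔ G.essImage Y₀ := by
  constructor
  · rintro ⟨Z, ⟨e⟩⟩
    exact ⟨Z, ⟨F.preimageIso (e ≪≫ eY.symm)⟩⟩
  · rintro ⟨Z, ⟨e⟩⟩
    exact ⟨Z, ⟨F.mapIso e ≪≫ eY⟩⟩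

lemma mem_RP_comp_iff (F : A ⥤ B) [F.Full] [F.Faithful] (G : E₁ ⥤ A)
    {Y₀ : A} {Y : B} (eY : F.obj Y₀ ≅ Y) :
    Y ∈ RP (G ⋙ F).essImage ↔ Y₀ ∈ RP G.essImage := by
  have ff := Functor.FullyFaithful.ofFullyFaithful F
  constructor
  · intro h X hX
    haveI h1 : Subsingleton (F.obj X ⟶ F.obj Y₀) := by
      rcases hX with ⟨Z, ⟨e⟩⟩
      exact subs_congr (Iso.refl _) eY (h _ ⟨Z, ⟨F.mapIso e⟩⟩)
    exact ff.homEquiv.subsingleton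
  · rintro h X' ⟨Z, ⟨e⟩⟩
    haveI h1 : Subsingleton (G.obj Z ⟶ Y₀) := h _ (G.obj_mem_essImage Z)
    have h2 : Subsingleton (F.obj (G.obj Z) ⟶ F.obj Y₀) := ff.homEquiv.symm.subsingleton
    exact subs_congr e.symm eY.symm h2

lemma mem_LP_comp_iff (F : A ⥤ B) [F.Full] [F.Faithful] (G : E₁ ⥤ A)
    {Y₀ : A} {Y : B} (eY : F.obj Y₀ ≅ Y) :
    Y ∈ LP (G ⋙ F).essImage ↔ Y₀ ∈ LP G.essImage := by
  have ff := Functor.FullyFaithful.ofFullyFaithful F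
  constructor
  · intro h X hX
    haveI h1 : Subsingleton (F.obj Y₀ ⟶ F.obj X) := by
      rcases hX with ⟨Z, ⟨e⟩⟩
      exact subs_congr eY (Iso.refl _) (h _ ⟨Z, ⟨F.mapIso e⟩⟩)
    exact ff.homEquiv.subsingleton
  · rintro h X' ⟨Z, ⟨e⟩⟩
    haveI h1 : Subsingleton (Y₀ ⟶ G.obj Z) := h _ (G.obj_mem_essImage Z)
    have h2 : Subsingleton (F.obj Y₀ ⟶ F.obj (G.obj Z)) := ff.homEquiv.symm.subsingleton
    exact subs_congr eY.symm e.symm h2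

lemma RP_comp (F : A ⥤ B) [F.Full] [F.Faithful] [F.EssSurj]
    (G : E₁ ⥤ A) (H : E₂ ⥤ A) (h : RP G.essImage = H.essImage) :
    RP (G ⋙ F).essImage = (H ⋙ F).essImage := by
  ext Y
  rw [mem_RP_comp_iff F G (F.objObjPreimageIso Y),
    h]
  exact (mem_comp_essImage_iff F H (F.objObjPreimageIso Y)).symm

lemma LP_comp (F : A ⥤ B) [F.Full] [F.Faithful] [F.EssSurj]
    (G : E₁ ⥤ A) (H : E₂ ⥤ A) (h : LP G.essImage = H.essImage) :
    LP (G ⋙ F).essImage = (H ⋙ F).essImage := by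
  ext Y
  rw [mem_LP_comp_iff F G (F.objObjPreimageIso Y),
    h]
  exact (mem_comp_essImage_iff F H (F.objObjPreimageIso Y)).symm

lemma essImage_precomp_essSurj (K : E₁ ⥤ E₂) (G : E₂ ⥤ A) [K.EssSurj] :
    (K ⋙ G).essImage = G.essImage := by
  ext Y
  constructor
  · rintro ⟨Z, ⟨e⟩⟩
    exact ⟨K.obj Z, ⟨e⟩⟩
  · rintro ⟨W, ⟨e⟩⟩
    exact ⟨K.objPreimage W, ⟨G.mapIso (K.objObjPreimageIso W) ≪≫ e⟩⟩

/-- Conjugating a commuting square of functors by a pair of equivalences. -/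
noncomputable def conjIso {A₁ B₁ A₂ B₂ : Type*} [Category A₁] [Category B₁]
    [Category A₂] [Category B₂] (eL : A₁ ≌ B₁) (eR : A₂ ≌ B₂)
    (G : A₁ ⥤ A₂) (H : B₁ ⥤ B₂) (t : G ⋙ eR.functor ≅ eL.functor ⋙ H) :
    eL.inverse ⋙ G ≅ H ⋙ eR.inverse :=
  calc eL.inverse ⋙ G
      ≅ eL.inverse ⋙ (G ⋙ eR.functor ⋙ eR.inverse) :=
        Functor.isoWhiskerLeft _ ((Functor.isoWhiskerLeft G eR.unitIso.symm ≪≫ G.rightUnitor).symm)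
    _ ≅ eL.inverse ⋙ ((G ⋙ eR.functor) ⋙ eR.inverse) :=
        Functor.isoWhiskerLeft _ (Functor.associator _ _ _).symm
    _ ≅ eL.inverse ⋙ ((eL.functor ⋙ H) ⋙ eR.inverse) :=
        Functor.isoWhiskerLeft _ (Functor.isoWhiskerRight t _)
    _ ≅ eL.inverse ⋙ (eL.functor ⋙ (H ⋙ eR.inverse)) :=
        Functor.isoWhiskerLeft _ (Functor.associator _ _ _)
    _ ≅ H ⋙ eR.inverse := eL.invFunIdAssoc _

end Transfer

section Rec

variable {C : Type*} {C' : Type*} {C'' : Type*}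
  [Category C] [Category C'] [Category C'']
  [HasShift C ℤ] [HasShift C' ℤ] [HasShift C'' ℤ]
  [Preadditive C] [Preadditive C'] [Preadditive C'']
  [HasZeroObject C] [HasZeroObject C'] [HasZeroObject C'']
  [∀ n : ℤ, (shiftFunctor C n).Additive] [∀ n : ℤ, (shiftFunctor C' n).Additive]
  [∀ n : ℤ, (shiftFunctor C'' n).Additive]
  [Pretriangulated C] [Pretriangulated C'] [Pretriangulated C'']

lemma isTriangleFunctor_comp {B : Type*} [Category B] [HasShift B ℤ] [Preadditive B]
    [HasZeroObject B] [∀ n : ℤ, (shiftFunctor B n).Additive] [Pretriangulated B]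
    {F : C ⥤ C'} {G : C' ⥤ B}
    (hF : IsTriangleFunctor F) (hG : IsTriangleFunctor G) :
    IsTriangleFunctor (F ⋙ G) := by
  obtain ⟨cF, tF⟩ := hF
  obtain ⟨cG, tG⟩ := hG
  letI := cF; letI := cG; letI := tF; letI := tG
  exact ⟨inferInstance, inferInstance⟩

variable {iStar : C ⥤ C'} {iPush : C' ⥤ C} {iShriek : C ⥤ C'}
  {jShriek : C'' ⥤ C} {jStar : C ⥤ C''} {jPush : C'' ⥤ C}

lemma perp_eqs (hrec : IsRecollement iStar iPush iShriek jShriek jStar jPush) :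
    RP jShriek.essImage = iPush.essImage ∧
    RP iPush.essImage = jPush.essImage ∧
    LP iPush.essImage = jShriek.essImage ∧
    LP jPush.essImage = iPush.essImage := by
  obtain ⟨adjI₁, adjI₂, adjJ₁, adjJ₂, _, _, _, _, _, _, hzero, tri1, tri2⟩ := hrec
  have hJS_IP : ∀ (Z : C'') (W : C'), Subsingleton (jShriek.obj Z ⟶ iPush.obj W) := by
    intro Z W
    haveI : Subsingleton (Z ⟶ jStar.obj (iPush.obj W)) := ⟨(hzero W).eq_of_tgt⟩
    exact (adjJ₁.homEquiv Z (iPush.obj W)).subsingleton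
  have hIP_JP : ∀ (W : C') (Z : C''), Subsingleton (iPush.obj W ⟶ jPush.obj Z) := by
    intro W Z
    haveI : Subsingleton (jStar.obj (iPush.obj W) ⟶ Z) := ⟨(hzero W).eq_of_src⟩
    exact (adjJ₂.homEquiv (iPush.obj W) Z).symm.subsingleton
  have K1 : ∀ X : C, IsZero (jStar.obj X) → iPush.essImage X := by
    intro X h
    obtain ⟨hm, htri⟩ := tri1 X
    have hiso := (Triangle.isZero₁_iff_isIso₂ _ htri).1 (isZero_leftAdj adjJ₁ h)
    simp only [Triangle.mk_mor₂] at hiso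
    haveI := hiso
    exact ⟨iStar.obj X, ⟨(@asIso _ _ _ _ (adjI₁.unit.app X) hiso).symm⟩⟩
  have K2 : ∀ X : C, IsZero (iShriek.obj X) → jPush.essImage X := by
    intro X h
    obtain ⟨hm, htri⟩ := tri2 X
    have hiso := (Triangle.isZero₁_iff_isIso₂ _ htri).1 (isZero_leftAdj adjI₂ h)
    simp only [Triangle.mk_mor₂] at hiso
    haveI := hiso
    exact ⟨jStar.obj X, ⟨(@asIso _ _ _ _ (adjJ₂.unit.app X) hiso).symm⟩⟩
  have K3 : ∀ X : C, IsZero (iStar.obj X) → jShriek.essImage X := by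
    intro X h
    obtain ⟨hm, htri⟩ := tri1 X
    have hiso := (Triangle.isZero₃_iff_isIso₁ _ htri).1 (isZero_leftAdj adjI₂ h)
    simp only [Triangle.mk_mor₁] at hiso
    haveI := hiso
    exact ⟨jStar.obj X, ⟨@asIso _ _ _ _ (adjJ₁.counit.app X) hiso⟩⟩
  refine ⟨?_, ?_, ?_, ?_⟩
  · ext Y
    constructor
    · intro h
      apply K1
      apply isZero_of_end_subsingleton
      haveI : Subsingleton (jShriek.obj (jStar.obj Y) ⟶ Y) :=
        h _ (jShriek.obj_mem_essImage _)
      exact (adjJ₁.homEquiv (jStar.obj Y) Y).symm.subsingleton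
    · rintro ⟨W, ⟨e⟩⟩ X ⟨Z, ⟨eZ⟩⟩
      exact subs_congr eZ.symm e.symm (hJS_IP Z W)
  · ext Y
    constructor
    · intro h
      apply K2
      apply isZero_of_end_subsingleton
      haveI : Subsingleton (iPush.obj (iShriek.obj Y) ⟶ Y) :=
        h _ (iPush.obj_mem_essImage _)
      exact (adjI₂.homEquiv (iShriek.obj Y) Y).symm.subsingleton
    · rintro ⟨Z, ⟨e⟩⟩ X ⟨W, ⟨eW⟩⟩
      exact subs_congr eW.symm e.symm (hIP_JP W Z)
  · ext Y
    constructor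
    · intro h
      apply K3
      apply isZero_of_end_subsingleton
      haveI : Subsingleton (Y ⟶ iPush.obj (iStar.obj Y)) :=
        h _ (iPush.obj_mem_essImage _)
      exact (adjI₁.homEquiv Y (iStar.obj Y)).subsingleton
    · rintro ⟨Z, ⟨e⟩⟩ X ⟨W, ⟨eW⟩⟩
      exact subs_congr e.symm eW.symm (hJS_IP Z W)
  · ext Y
    constructor
    · intro h
      apply K1
      apply isZero_of_end_subsingleton
      haveI : Subsingleton (Y ⟶ jPush.obj (jStar.obj Y)) :=
        h _ (jPush.obj_mem_essImage _)
      exact (adjJ₂.homEquiv Y (jStar.obj Y)).subsingleton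
    · rintro ⟨W, ⟨e⟩⟩ X ⟨Z, ⟨eZ⟩⟩
      exact subs_congr e.symm eZ.symm (hIP_JP W Z)

end Rec

end RecollementProofAux

namespace RecollementProofAux

open CategoryTheory CategoryTheory.Limits CategoryTheory.Pretriangulated

section Main

set_option linter.unusedSectionVars false

variable {C C' C'' D D' D'' : Type*}
  [Category C] [Category C'] [Category C''] [Category D] [Category D'] [Category D'']
  [HasShift C ℤ] [HasShift C' ℤ] [HasShift C'' ℤ]
  [HasShift D ℤ] [HasShift D' ℤ] [HasShift D'' ℤ]
  [Preadditive C] [Preadditive C'] [Preadditive C'']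
  [Preadditive D] [Preadditive D'] [Preadditive D'']
  [HasZeroObject C] [HasZeroObject C'] [HasZeroObject C'']
  [HasZeroObject D] [HasZeroObject D'] [HasZeroObject D'']
  [∀ n : ℤ, (shiftFunctor C n).Additive] [∀ n : ℤ, (shiftFunctor C' n).Additive]
  [∀ n : ℤ, (shiftFunctor C'' n).Additive]
  [∀ n : ℤ, (shiftFunctor D n).Additive] [∀ n : ℤ, (shiftFunctor D' n).Additive]
  [∀ n : ℤ, (shiftFunctor D'' n).Additive]
  [Pretriangulated C] [Pretriangulated C'] [Pretriangulated C'']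
  [Pretriangulated D] [Pretriangulated D'] [Pretriangulated D'']
  {iStar : C ⥤ C'} {iPush : C' ⥤ C} {iShriek : C ⥤ C'}
  {jShriek : C'' ⥤ C} {jStar : C ⥤ C''} {jPush : C'' ⥤ C}
  {iStarD : D ⥤ D'} {iPushD : D' ⥤ D} {iShriekD : D ⥤ D'}
  {jShriekD : D'' ⥤ D} {jStarD : D ⥤ D''} {jPushD : D'' ⥤ D}

lemma derive_all
    (hrecC : IsRecollement iStar iPush iShriek jShriek jStar jPush)
    (hrecD : IsRecollement iStarD iPushD iShriekD jShriekD jStarD jPushD)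
    (F : C ⥤ D) (hE : F.IsEquivalence)
    (hor : (jShriek ⋙ F).essImage = jShriekD.essImage ∨
      (iPush ⋙ F).essImage = iPushD.essImage ∨
      (jPush ⋙ F).essImage = jPushD.essImage) :
    (jShriek ⋙ F).essImage = jShriekD.essImage ∧
    (iPush ⋙ F).essImage = iPushD.essImage ∧
    (jPush ⋙ F).essImage = jPushD.essImage := by
  letI := hE
  obtain ⟨P1, P2, P3, P4⟩ := perp_eqs hrecC
  obtain ⟨Q1, Q2, Q3, Q4⟩ := perp_eqs hrecD
  have t1 := RP_comp F jShriek iPush P1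
  have t2 := RP_comp F iPush jPush P2
  have t3 := LP_comp F iPush jShriek P3
  have t4 := LP_comp F jPush iPush P4
  rcases hor with h1 | h2 | h3
  · have h2 : (iPush ⋙ F).essImage = iPushD.essImage := by
      rw [h1] at t1; exact t1.symm.trans Q1
    refine ⟨h1, h2, ?_⟩
    rw [h2] at t2; exact t2.symm.trans Q2
  · have h1 : (jShriek ⋙ F).essImage = jShriekD.essImage := by
      rw [h2] at t3; exact t3.symm.trans Q3
    refine ⟨h1, h2, ?_⟩
    rw [h2] at t2; exact t2.symm.trans Q2
  · have h2 : (iPush ⋙ F).essImage = iPushD.essImage := by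
      rw [h3] at t4; exact t4.symm.trans Q4
    refine ⟨?_, h2, h3⟩
    rw [h2] at t3; exact t3.symm.trans Q3

lemma construct
    (tiPush : IsTriangleFunctor iPush) (tjShriek : IsTriangleFunctor jShriek)
    (tiStarD : IsTriangleFunctor iStarD) (tjStarD : IsTriangleFunctor jStarD)
    (hrecC : IsRecollement iStar iPush iShriek jShriek jStar jPush)
    (hrecD : IsRecollement iStarD iPushD iShriekD jShriekD jStarD jPushD)
    (F : C ⥤ D) (hE : F.IsEquivalence) (hT : IsTriangleFunctor F)
    (h1 : (jShriek ⋙ F).essImage = jShriekD.essImage)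
    (h2 : (iPush ⋙ F).essImage = iPushD.essImage) :
    ∃ (F' : C' ⥤ D') (F'' : C'' ⥤ D''),
      IsRecollementEquiv F' F F'' iStar iPush iShriek jShriek jStar jPush
        iStarD iPushD iShriekD jShriekD jStarD jPushD := by
  classical
  letI := hE
  obtain ⟨adjI₁, adjI₂, adjJ₁, adjJ₂, hf1, hf2, hf3, hf4, hf5, hf6,
    hzero, tri1, tri2⟩ := hrecC
  obtain ⟨adjID₁, adjID₂, adjJD₁, adjJD₂, hg1, hg2, hg3, hg4, hg5, hg6,
    hzeroD, tri1D, tri2D⟩ := hrecD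
  letI := hf1; letI := hf2; letI := hf3; letI := hf4; letI := hf5; letI := hf6
  letI := hg1; letI := hg2; letI := hg3; letI := hg4; letI := hg5; letI := hg6
  -- the natural isomorphism `iPush ⋙ F ≅ F' ⋙ iPushD`
  let τ : iPush ⋙ F ⟶ (iPush ⋙ F ⋙ iStarD) ⋙ iPushD :=
    { app := fun X' => adjID₁.unit.app (F.obj (iPush.obj X'))
      naturality := fun _ _ f => adjID₁.unit.naturality (F.map (iPush.map f)) }
  haveI : ∀ X', IsIso (τ.app X') := by
    intro X'
    have hmem : iPushD.essImage (F.obj (iPush.obj X')) := by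
      rw [← h2]; exact (iPush ⋙ F).obj_mem_essImage X'
    exact (adjID₁.isIso_unit_app_iff_mem_essImage).2 hmem
  haveI : IsIso τ := NatIso.isIso_of_isIso_app τ
  have A : iPush ⋙ F ≅ (iPush ⋙ F ⋙ iStarD) ⋙ iPushD := asIso τ
  -- the natural isomorphism `jShriek ⋙ F ≅ F'' ⋙ jShriekD`
  let σ : (jShriek ⋙ F ⋙ jStarD) ⋙ jShriekD ⟶ jShriek ⋙ F :=
    { app := fun Z => adjJD₁.counit.app (F.obj (jShriek.obj Z))
      naturality := fun _ _ f => adjJD₁.counit.naturality (F.map (jShriek.map f)) }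
  haveI : ∀ Z, IsIso (σ.app Z) := by
    intro Z
    have hmem : jShriekD.essImage (F.obj (jShriek.obj Z)) := by
      rw [← h1]; exact (jShriek ⋙ F).obj_mem_essImage Z
    exact (adjJD₁.isIso_counit_app_iff_mem_essImage).2 hmem
  haveI : IsIso σ := NatIso.isIso_of_isIso_app σ
  have Ciso : jShriek ⋙ F ≅ (jShriek ⋙ F ⋙ jStarD) ⋙ jShriekD := (asIso σ).symm
  -- F' is an equivalence
  haveI : ((iPush ⋙ F ⋙ iStarD) ⋙ iPushD).Faithful := Functor.Faithful.of_iso A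
  haveI : (iPush ⋙ F ⋙ iStarD).Faithful :=
    Functor.Faithful.of_comp (iPush ⋙ F ⋙ iStarD) iPushD
  haveI : (iPush ⋙ F ⋙ iStarD).Full := Functor.Full.of_comp_faithful_iso A.symm
  haveI : (iPush ⋙ F ⋙ iStarD).EssSurj := by
    refine ⟨fun Y' => ?_⟩
    have hmem : (iPush ⋙ F).essImage (iPushD.obj Y') := by
      rw [h2]; exact iPushD.obj_mem_essImage Y'
    obtain ⟨X', ⟨e⟩⟩ := hmem
    exact ⟨X', ⟨iStarD.mapIso e ≪≫ asIso (adjID₁.counit.app Y')⟩⟩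
  haveI hE' : (iPush ⋙ F ⋙ iStarD).IsEquivalence := ⟨inferInstance, inferInstance, inferInstance⟩
  -- F'' is an equivalence
  haveI : ((jShriek ⋙ F ⋙ jStarD) ⋙ jShriekD).Faithful :=
    Functor.Faithful.of_iso Ciso
  haveI : (jShriek ⋙ F ⋙ jStarD).Faithful :=
    Functor.Faithful.of_comp (jShriek ⋙ F ⋙ jStarD) jShriekD
  haveI : (jShriek ⋙ F ⋙ jStarD).Full := Functor.Full.of_comp_faithful_iso Ciso.symm
  haveI : (jShriek ⋙ F ⋙ jStarD).EssSurj := by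
    refine ⟨fun Z'' => ?_⟩
    have hmem : (jShriek ⋙ F).essImage (jShriekD.obj Z'') := by
      rw [h1]; exact jShriekD.obj_mem_essImage Z''
    obtain ⟨W, ⟨e⟩⟩ := hmem
    exact ⟨W, ⟨jStarD.mapIso e ≪≫ (asIso (adjJD₁.unit.app Z'')).symm⟩⟩
  haveI hE'' : (jShriek ⋙ F ⋙ jStarD).IsEquivalence := ⟨inferInstance, inferInstance, inferInstance⟩
  -- triangle functors
  have hT' : IsTriangleFunctor (iPush ⋙ F ⋙ iStarD) :=
    isTriangleFunctor_comp tiPush (isTriangleFunctor_comp hT tiStarD)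
  have hT'' : IsTriangleFunctor (jShriek ⋙ F ⋙ jStarD) :=
    isTriangleFunctor_comp tjShriek (isTriangleFunctor_comp hT tjStarD)
  -- adjunctions coming from the equivalences
  let eF := F.asEquivalence
  let eF' := (iPush ⋙ F ⋙ iStarD).asEquivalence
  let eF'' := (jShriek ⋙ F ⋙ jStarD).asEquivalence
  have adjF : F ⊣ eF.inverse := eF.toAdjunction
  have adjFinv : eF.inverse ⊣ F := eF.symm.toAdjunction
  have adjF' : (iPush ⋙ F ⋙ iStarD) ⊣ eF'.inverse := eF'.toAdjunction
  have adjF'inv : eF'.inverse ⊣ (iPush ⋙ F ⋙ iStarD) := eF'.symm.toAdjunction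
  have adjF'' : (jShriek ⋙ F ⋙ jStarD) ⊣ eF''.inverse := eF''.toAdjunction
  have adjF''inv : eF''.inverse ⊣ (jShriek ⋙ F ⋙ jStarD) := eF''.symm.toAdjunction
  -- the remaining commutation isomorphisms, via uniqueness of adjoints
  have B2 : eF'.inverse ⋙ iPush ≅ iPushD ⋙ eF.inverse := conjIso eF' eF iPush iPushD A
  have iso_iStar : iStar ⋙ (iPush ⋙ F ⋙ iStarD) ≅ F ⋙ iStarD :=
    Adjunction.leftAdjointUniq (adjI₁.comp adjF')
      ((adjF.comp adjID₁).ofNatIsoRight B2.symm)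
  have iso_iShriek : iShriek ⋙ (iPush ⋙ F ⋙ iStarD) ≅ F ⋙ iShriekD :=
    Adjunction.rightAdjointUniq (adjF'inv.comp adjI₂)
      ((adjID₂.comp adjFinv).ofNatIsoLeft B2.symm)
  have D2 : eF''.inverse ⋙ jShriek ≅ jShriekD ⋙ eF.inverse :=
    conjIso eF'' eF jShriek jShriekD Ciso
  have iso_jStar : jStar ⋙ (jShriek ⋙ F ⋙ jStarD) ≅ F ⋙ jStarD :=
    Adjunction.rightAdjointUniq (adjF''inv.comp adjJ₁)
      ((adjJD₁.comp adjFinv).ofNatIsoLeft D2.symm)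
  have E2 : eF.inverse ⋙ jStar ≅ jStarD ⋙ eF''.inverse :=
    conjIso eF eF'' jStar jStarD iso_jStar
  have iso_jPush : jPush ⋙ F ≅ (jShriek ⋙ F ⋙ jStarD) ⋙ jPushD :=
    Adjunction.rightAdjointUniq (adjFinv.comp adjJ₂)
      ((adjJD₂.comp adjF''inv).ofNatIsoLeft E2.symm)
  exact ⟨iPush ⋙ F ⋙ iStarD, jShriek ⋙ F ⋙ jStarD,
    hE', hE, hE'', hT', hT, hT'', ⟨iso_iStar⟩, ⟨A⟩, ⟨iso_iShriek⟩,
    ⟨Ciso⟩, ⟨iso_jStar⟩, ⟨iso_jPush⟩⟩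

end Main

end RecollementProofAux

section Statement

variable {C C' C'' D D' D'' : Type*}
  [Category C] [Category C'] [Category C''] [Category D] [Category D'] [Category D'']
  [HasShift C ℤ] [HasShift C' ℤ] [HasShift C'' ℤ]
  [HasShift D ℤ] [HasShift D' ℤ] [HasShift D'' ℤ]
  [Preadditive C] [Preadditive C'] [Preadditive C'']
  [Preadditive D] [Preadditive D'] [Preadditive D'']
  [HasZeroObject C] [HasZeroObject C'] [HasZeroObject C'']
  [HasZeroObject D] [HasZeroObject D'] [HasZeroObject D'']
  [∀ n : ℤ, (shiftFunctor C n).Additive] [∀ n : ℤ, (shiftFunctor C' n).Additive]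
  [∀ n : ℤ, (shiftFunctor C'' n).Additive]
  [∀ n : ℤ, (shiftFunctor D n).Additive] [∀ n : ℤ, (shiftFunctor D' n).Additive]
  [∀ n : ℤ, (shiftFunctor D'' n).Additive]
  [Pretriangulated C] [Pretriangulated C'] [Pretriangulated C'']
  [Pretriangulated D] [Pretriangulated D'] [Pretriangulated D'']

/-- **Lemma 1.3 (1).** Two recollements `(𝒞', 𝒞, 𝒞'')` and `(𝒟', 𝒟, 𝒟'')` are equivalent
iff there is a triangle-equivalence `F : 𝒞 ⥤ 𝒟` with `F(Im j_!) = Im j_!^𝒟`,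
`F(Im i_*) = Im i_*^𝒟` and `F(Im j_*) = Im j_*^𝒟`, iff there is a triangle-equivalence
`F` satisfying at least one of these three equalities. -/
theorem recollement_equiv_iff_image_conditions
    (iStar : C ⥤ C') (iPush : C' ⥤ C) (iShriek : C ⥤ C')
    (jShriek : C'' ⥤ C) (jStar : C ⥤ C'') (jPush : C'' ⥤ C)
    (iStarD : D ⥤ D') (iPushD : D' ⥤ D) (iShriekD : D ⥤ D')
    (jShriekD : D'' ⥤ D) (jStarD : D ⥤ D'') (jPushD : D'' ⥤ D)
    (tiStar : IsTriangleFunctor iStar) (tiPush : IsTriangleFunctor iPush)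
    (tiShriek : IsTriangleFunctor iShriek) (tjShriek : IsTriangleFunctor jShriek)
    (tjStar : IsTriangleFunctor jStar) (tjPush : IsTriangleFunctor jPush)
    (tiStarD : IsTriangleFunctor iStarD) (tiPushD : IsTriangleFunctor iPushD)
    (tiShriekD : IsTriangleFunctor iShriekD) (tjShriekD : IsTriangleFunctor jShriekD)
    (tjStarD : IsTriangleFunctor jStarD) (tjPushD : IsTriangleFunctor jPushD)
    (hrecC : IsRecollement iStar iPush iShriek jShriek jStar jPush)
    (hrecD : IsRecollement iStarD iPushD iShriekD jShriekD jStarD jPushD) :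
    ((∃ (F' : C' ⥤ D') (F : C ⥤ D) (F'' : C'' ⥤ D''),
        IsRecollementEquiv F' F F'' iStar iPush iShriek jShriek jStar jPush
          iStarD iPushD iShriekD jShriekD jStarD jPushD) ↔
      (∃ F : C ⥤ D, F.IsEquivalence ∧ IsTriangleFunctor F ∧
        (jShriek ⋙ F).essImage = jShriekD.essImage ∧
        (iPush ⋙ F).essImage = iPushD.essImage ∧
        (jPush ⋙ F).essImage = jPushD.essImage)) ∧
    ((∃ (F' : C' ⥤ D') (F : C ⥤ D) (F'' : C'' ⥤ D''),
        IsRecollementEquiv F' F F'' iStar iPush iShriek jShriek jStar jPush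
          iStarD iPushD iShriekD jShriekD jStarD jPushD) ↔
      (∃ F : C ⥤ D, F.IsEquivalence ∧ IsTriangleFunctor F ∧
        ((jShriek ⋙ F).essImage = jShriekD.essImage ∨
         (iPush ⋙ F).essImage = iPushD.essImage ∨
         (jPush ⋙ F).essImage = jPushD.essImage))) := by
  have fwd : (∃ (F' : C' ⥤ D') (F : C ⥤ D) (F'' : C'' ⥤ D''),
        IsRecollementEquiv F' F F'' iStar iPush iShriek jShriek jStar jPush
          iStarD iPushD iShriekD jShriekD jStarD jPushD) →
      (∃ F : C ⥤ D, F.IsEquivalence ∧ IsTriangleFunctor F ∧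
        (jShriek ⋙ F).essImage = jShriekD.essImage ∧
        (iPush ⋙ F).essImage = iPushD.essImage ∧
        (jPush ⋙ F).essImage = jPushD.essImage) := by
    rintro ⟨F', F, F'', hF'e, hFe, hF''e, _, hFt, _, ⟨n1⟩, ⟨n2⟩, _, ⟨n4⟩, _, ⟨n6⟩⟩
    letI := hF'e; letI := hF''e
    refine ⟨F, hFe, hFt, ?_, ?_, ?_⟩
    · rw [Functor.essImage_eq_of_natIso n4]
      exact RecollementProofAux.essImage_precomp_essSurj F'' jShriekD
    · rw [Functor.essImage_eq_of_natIso n2]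
      exact RecollementProofAux.essImage_precomp_essSurj F' iPushD
    · rw [Functor.essImage_eq_of_natIso n6]
      exact RecollementProofAux.essImage_precomp_essSurj F'' jPushD
  have bwd : ∀ F : C ⥤ D, F.IsEquivalence → IsTriangleFunctor F →
      ((jShriek ⋙ F).essImage = jShriekD.essImage ∨
       (iPush ⋙ F).essImage = iPushD.essImage ∨
       (jPush ⋙ F).essImage = jPushD.essImage) →
      ∃ (F' : C' ⥤ D') (F'' : C'' ⥤ D''),
        IsRecollementEquiv F' F F'' iStar iPush iShriek jShriek jStar jPush
          iStarD iPushD iShriekD jShriekD jStarD jPushD := by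
    intro F hFe hFt hor
    obtain ⟨h1, h2, h3⟩ := RecollementProofAux.derive_all hrecC hrecD F hFe hor
    exact RecollementProofAux.construct tiPush tjShriek tiStarD tjStarD hrecC hrecD
      F hFe hFt h1 h2
  constructor
  · constructor
    · exact fwd
    · rintro ⟨F, hFe, hFt, h1, h2, h3⟩
      obtain ⟨F', F'', h⟩ := bwd F hFe hFt (Or.inl h1)
      exact ⟨F', F, F'', h⟩
  · constructor
    · intro h
      obtain ⟨F, hFe, hFt, h1, h2, h3⟩ := fwd h
      exact ⟨F, hFe, hFt, Or.inl h1⟩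
    · rintro ⟨F, hFe, hFt, hor⟩
      obtain ⟨F', F'', h⟩ := bwd F hFe hFt hor
      exact ⟨F', F, F'', h⟩

end Statement
end

section
/- Given an unbounded ladder of triangulated categories (𝒞′, 𝒞, 𝒞″) of period t, the (qt + l)-th left (respectively right, respectively full, respectively opposed) recollement of the ladder is equivalent to the l-th left (respectively right, full, opposed) recollement, for every q ∈ ℤ and l = 0, …, t − 1, and these equivalences are realized by the same triple of equivalences. -/
/-!
STATEMENT 18: Given an unbounded ladder of triangulated categories (𝒞′, 𝒞, 𝒞″) of period t,
the (qt + l)-th left (respectively right, full, opposed) recollement of the ladder is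
equivalent to the l-th left (respectively right, full, opposed) recollement, for every
q ∈ ℤ and l = 0, …, t − 1, and these equivalences are realized by the same triple of
equivalences.
-/
open CategoryTheory CategoryTheory.Limits CategoryTheory.Pretriangulated

section AuxTransfer

variable {A₁ A₂ B₁ B₂ : Type*} [Category A₁] [Category A₂] [Category B₁] [Category B₂]

lemma aux_transfer_right {L₁ : A₁ ⥤ B₁} {R₁ : B₁ ⥤ A₁} {L₂ : A₂ ⥤ B₂} {R₂ : B₂ ⥤ A₂}
    (F : A₁ ⥤ A₂) (G : B₁ ⥤ B₂) [F.IsEquivalence] [G.IsEquivalence]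
    (adj₁ : L₁ ⊣ R₁) (adj₂ : L₂ ⊣ R₂) (e : L₁ ⋙ G ≅ F ⋙ L₂) :
    Nonempty (R₁ ⋙ F ≅ G ⋙ R₂) := by
  have adjA : L₁ ⋙ G ⊣ G.inv ⋙ R₁ := adj₁.comp G.asEquivalence.toAdjunction
  have adjB : F ⋙ L₂ ⊣ R₂ ⋙ F.inv := F.asEquivalence.toAdjunction.comp adj₂
  have adjC : L₁ ⋙ G ⊣ R₂ ⋙ F.inv := adjB.ofNatIsoLeft e.symm
  have i : G.inv ⋙ R₁ ≅ R₂ ⋙ F.inv := adjA.rightAdjointUniq adjC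
  exact ⟨(Functor.leftUnitor _).symm ≪≫ Functor.isoWhiskerRight G.asEquivalence.unitIso (R₁ ⋙ F)
    ≪≫ Functor.associator G G.inv (R₁ ⋙ F)
    ≪≫ Functor.isoWhiskerLeft G ((Functor.associator G.inv R₁ F).symm ≪≫ Functor.isoWhiskerRight i F
        ≪≫ Functor.associator R₂ F.inv F ≪≫ Functor.isoWhiskerLeft R₂ F.asEquivalence.counitIso
        ≪≫ Functor.rightUnitor R₂)⟩

lemma aux_transfer_left {L₁ : A₁ ⥤ B₁} {R₁ : B₁ ⥤ A₁} {L₂ : A₂ ⥤ B₂} {R₂ : B₂ ⥤ A₂}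
    (F : A₁ ⥤ A₂) (G : B₁ ⥤ B₂) [F.IsEquivalence] [G.IsEquivalence]
    (adj₁ : L₁ ⊣ R₁) (adj₂ : L₂ ⊣ R₂) (e : R₁ ⋙ F ≅ G ⋙ R₂) :
    Nonempty (L₁ ⋙ G ≅ F ⋙ L₂) := by
  have i : G.inv ⋙ R₁ ≅ R₂ ⋙ F.inv :=
    (Functor.rightUnitor _).symm
    ≪≫ Functor.isoWhiskerLeft (G.inv ⋙ R₁) F.asEquivalence.unitIso
    ≪≫ (Functor.associator (G.inv ⋙ R₁) F F.inv).symm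
    ≪≫ Functor.isoWhiskerRight (Functor.associator G.inv R₁ F ≪≫ Functor.isoWhiskerLeft G.inv e
        ≪≫ (Functor.associator G.inv G R₂).symm
        ≪≫ Functor.isoWhiskerRight G.asEquivalence.counitIso R₂ ≪≫ R₂.leftUnitor) F.inv
  have adjA : L₁ ⋙ G ⊣ G.inv ⋙ R₁ := adj₁.comp G.asEquivalence.toAdjunction
  have adjB : F ⋙ L₂ ⊣ R₂ ⋙ F.inv := F.asEquivalence.toAdjunction.comp adj₂
  have adjB' : F ⋙ L₂ ⊣ G.inv ⋙ R₁ := adjB.ofNatIsoRight i.symm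
  exact ⟨adjA.leftAdjointUniq adjB'⟩

lemma aux_flip_iso (F : A₁ ⥤ A₂) (G : B₁ ⥤ B₂) [F.IsEquivalence] [G.IsEquivalence]
    (H₁ : A₁ ⥤ B₁) (H₂ : A₂ ⥤ B₂) (e : H₁ ⋙ G ≅ F ⋙ H₂) :
    Nonempty (H₂ ⋙ G.inv ≅ F.inv ⋙ H₁) := by
  refine ⟨Iso.symm ?_⟩
  exact (Functor.rightUnitor _).symm
    ≪≫ Functor.isoWhiskerLeft (F.inv ⋙ H₁) G.asEquivalence.unitIso
    ≪≫ (Functor.associator (F.inv ⋙ H₁) G G.inv).symm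
    ≪≫ Functor.isoWhiskerRight (Functor.associator F.inv H₁ G ≪≫ Functor.isoWhiskerLeft F.inv e
        ≪≫ (Functor.associator F.inv F H₂).symm
        ≪≫ Functor.isoWhiskerRight F.asEquivalence.counitIso H₂ ≪≫ H₂.leftUnitor) G.inv

end AuxTransfer

section AuxTriangle

variable {C : Type*} {D : Type*} {E : Type*} [Category C] [Category D] [Category E]
  [HasShift C ℤ] [HasShift D ℤ] [HasShift E ℤ]
  [Preadditive C] [Preadditive D] [Preadditive E]
  [HasZeroObject C] [HasZeroObject D] [HasZeroObject E]
  [∀ n : ℤ, (shiftFunctor C n).Additive] [∀ n : ℤ, (shiftFunctor D n).Additive]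
  [∀ n : ℤ, (shiftFunctor E n).Additive]
  [Pretriangulated C] [Pretriangulated D] [Pretriangulated E]

lemma aux_tf_id : IsTriangleFunctor (𝟭 C) := ⟨inferInstance, inferInstance⟩

lemma aux_tf_comp {F : C ⥤ D} {G : D ⥤ E} (hF : IsTriangleFunctor F)
    (hG : IsTriangleFunctor G) : IsTriangleFunctor (F ⋙ G) := by
  obtain ⟨cF, hF⟩ := hF
  obtain ⟨cG, hG⟩ := hG
  letI := cF; letI := cG; letI := hF; letI := hG
  exact ⟨inferInstance, inferInstance⟩

lemma aux_tf_inv {F : C ⥤ D} [F.IsEquivalence] (h : IsTriangleFunctor F) :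
    IsTriangleFunctor F.inv := by
  obtain ⟨cF, hF⟩ := h
  letI := cF; letI := hF
  haveI : (MorphismProperty.isomorphisms C).IsCompatibleWithShift ℤ := by
    constructor
    intro n
    ext X Y f
    constructor
    · intro hf
      have : IsIso ((shiftFunctor C n).map f) := hf
      exact isIso_of_reflects_iso f (shiftFunctor C n)
    · intro hf
      have : IsIso f := hf
      exact inferInstanceAs (IsIso ((shiftFunctor C n).map f))
  haveI : F.IsLocalization (MorphismProperty.isomorphisms C) :=
    Functor.IsLocalization.of_isEquivalence F _ le_rfl
  letI : Localization.Lifting F (MorphismProperty.isomorphisms C) (𝟭 C) F.inv :=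
    ⟨F.asEquivalence.unitIso.symm⟩
  letI : F.inv.CommShift ℤ :=
    Functor.commShiftOfLocalization F (MorphismProperty.isomorphisms C) ℤ (𝟭 C) F.inv
  haveI : NatTrans.CommShift
      (Localization.Lifting.iso F (MorphismProperty.isomorphisms C) (𝟭 C) F.inv).hom ℤ :=
    NatTrans.commShift_iso_hom_of_localization F (MorphismProperty.isomorphisms C) ℤ (𝟭 C) F.inv
  haveI : F.inv.IsTriangulated :=
    Functor.isTriangulated_of_precomp_iso
      (Localization.Lifting.iso F (MorphismProperty.isomorphisms C) (𝟭 C) F.inv)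
  exact ⟨inferInstance, inferInstance⟩

end AuxTriangle

section Statement

universe v v' v'' u u' u''

variable {C : Type u} {C' : Type u'} {C'' : Type u''}
  [Category.{v} C] [Category.{v'} C'] [Category.{v''} C'']
  [HasShift C ℤ] [HasShift C' ℤ] [HasShift C'' ℤ]
  [Preadditive C] [Preadditive C'] [Preadditive C'']
  [HasZeroObject C] [HasZeroObject C'] [HasZeroObject C'']
  [∀ n : ℤ, (shiftFunctor C n).Additive] [∀ n : ℤ, (shiftFunctor C' n).Additive]
  [∀ n : ℤ, (shiftFunctor C'' n).Additive]
  [Pretriangulated C] [Pretriangulated C'] [Pretriangulated C'']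

/-- **Lemma 1.3 (2).** In an unbounded ladder of period `t`, the `(r t + l)`-th left
(resp. right, full, opposed) recollement is equivalent to the `l`-th left (resp. right,
full, opposed) recollement, for all `r ∈ ℤ` and `l = 0, …, t - 1`, under the same triple
of equivalences. -/
theorem ladder_period_recollement_equiv
    (a : ℤ → C' ⥤ C) (b : ℤ → C'' ⥤ C) (p : ℤ → C ⥤ C') (q : ℤ → C ⥤ C'')
    (hladder : IsUnboundedLadder a b p q) (t : ℤ) (hper : LadderHasPeriod a b p q t)
    (r l : ℤ) (hl0 : 0 ≤ l) (hlt : l < t) :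
    ∃ (F' : C' ⥤ C') (F : C ⥤ C) (F'' : C'' ⥤ C''),
      IsLeftRecollementEquiv F' F F''
        (p (r * t + l)) (a (r * t + l)) (b (r * t + l)) (q (r * t + l))
        (p l) (a l) (b l) (q l) ∧
      IsLeftRecollementEquiv F'' F F'
        (q (r * t + l)) (b (r * t + l + 1)) (a (r * t + l)) (p (r * t + l + 1))
        (q l) (b (l + 1)) (a l) (p (l + 1)) ∧
      IsRecollementEquiv F' F F''
        (p (r * t + l)) (a (r * t + l)) (p (r * t + l + 1))
        (b (r * t + l)) (q (r * t + l)) (b (r * t + l + 1))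
        (p l) (a l) (p (l + 1)) (b l) (q l) (b (l + 1)) ∧
      IsRecollementEquiv F'' F F'
        (q (r * t + l)) (b (r * t + l + 1)) (q (r * t + l + 1))
        (a (r * t + l)) (p (r * t + l + 1)) (a (r * t + l + 1))
        (q l) (b (l + 1)) (q (l + 1)) (a l) (p (l + 1)) (a (l + 1)) := by
  classical
  obtain ⟨F', F, F'', hF⟩ := hper.2.1
  obtain ⟨hE', hE, hE'', hT', hT, hT'', ⟨eP0⟩, ⟨eA0⟩, ⟨eB0⟩, ⟨eQ0⟩⟩ := hF
  haveI := hE'; haveI := hE; haveI := hE''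
  let adjPA : ∀ n : ℤ, p n ⊣ a n := fun n => (hladder.left n).choose
  let adjBQ : ∀ n : ℤ, b n ⊣ q n := fun n => (hladder.left n).choose_spec.choose
  let adjQB : ∀ n : ℤ, q n ⊣ b (n + 1) := fun n => (hladder.right n).choose
  let adjAP : ∀ n : ℤ, a n ⊣ p (n + 1) := fun n => (hladder.right n).choose_spec.choose
  -- one-step transfers between the four commuting-isomorphism families
  have stepPA : ∀ n : ℤ, Nonempty (p (n + t) ⋙ F' ≅ F ⋙ p n) →
      Nonempty (a (n + t) ⋙ F ≅ F' ⋙ a n) := fun n h =>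
    aux_transfer_right F F' (adjPA (n + t)) (adjPA n) h.some
  have stepAP : ∀ n : ℤ, Nonempty (a (n + t) ⋙ F ≅ F' ⋙ a n) →
      Nonempty (p (n + t) ⋙ F' ≅ F ⋙ p n) := fun n h =>
    aux_transfer_left F F' (adjPA (n + t)) (adjPA n) h.some
  have stepAPsucc : ∀ n : ℤ, Nonempty (a (n + t) ⋙ F ≅ F' ⋙ a n) →
      Nonempty (p ((n + 1) + t) ⋙ F' ≅ F ⋙ p (n + 1)) := by
    intro n h
    have h2 := aux_transfer_right F' F (adjAP (n + t)) (adjAP n) h.some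
    rwa [show n + t + 1 = (n + 1) + t by ring] at h2
  have stepPsuccA : ∀ n : ℤ, Nonempty (p ((n + 1) + t) ⋙ F' ≅ F ⋙ p (n + 1)) →
      Nonempty (a (n + t) ⋙ F ≅ F' ⋙ a n) := by
    intro n h
    rw [show (n + 1) + t = n + t + 1 by ring] at h
    exact aux_transfer_left F' F (adjAP (n + t)) (adjAP n) h.some
  have stepQB : ∀ n : ℤ, Nonempty (q (n + t) ⋙ F'' ≅ F ⋙ q n) →
      Nonempty (b (n + t) ⋙ F ≅ F'' ⋙ b n) := fun n h =>
    aux_transfer_left F'' F (adjBQ (n + t)) (adjBQ n) h.some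
  have stepBQ : ∀ n : ℤ, Nonempty (b (n + t) ⋙ F ≅ F'' ⋙ b n) →
      Nonempty (q (n + t) ⋙ F'' ≅ F ⋙ q n) := fun n h =>
    aux_transfer_right F'' F (adjBQ (n + t)) (adjBQ n) h.some
  have stepQBsucc : ∀ n : ℤ, Nonempty (q (n + t) ⋙ F'' ≅ F ⋙ q n) →
      Nonempty (b ((n + 1) + t) ⋙ F ≅ F'' ⋙ b (n + 1)) := by
    intro n h
    have h2 := aux_transfer_right F F'' (adjQB (n + t)) (adjQB n) h.some
    rwa [show n + t + 1 = (n + 1) + t by ring] at h2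
  have stepBsuccQ : ∀ n : ℤ, Nonempty (b ((n + 1) + t) ⋙ F ≅ F'' ⋙ b (n + 1)) →
      Nonempty (q (n + t) ⋙ F'' ≅ F ⋙ q n) := by
    intro n h
    rw [show (n + 1) + t = n + t + 1 by ring] at h
    exact aux_transfer_left F F'' (adjQB (n + t)) (adjQB n) h.some
  -- the commuting isomorphisms hold at every level of the ladder
  have key : ∀ n : ℤ, Nonempty (p (n + t) ⋙ F' ≅ F ⋙ p n) ∧
      Nonempty (q (n + t) ⋙ F'' ≅ F ⋙ q n) := by
    intro n
    induction n using Int.induction_on with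
    | zero =>
      constructor
      · rw [zero_add]; exact ⟨eP0⟩
      · rw [zero_add]; exact ⟨eQ0⟩
    | succ k ih =>
      exact ⟨stepAPsucc k (stepPA k ih.1), stepBQ ((k : ℤ) + 1) (stepQBsucc k ih.2)⟩
    | pred k ih =>
      constructor
      · refine stepAP _ (stepPsuccA (-(k : ℤ) - 1) ?_)
        rw [show (-(k : ℤ) - 1) + 1 = -(k : ℤ) by ring]
        exact ih.1
      · refine stepBsuccQ (-(k : ℤ) - 1) ?_
        rw [show (-(k : ℤ) - 1) + 1 = -(k : ℤ) by ring]
        exact stepQB _ ih.2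
  -- iterate the equivalence |r| times
  have iter : ∀ r : ℤ, ∃ (G' : C' ⥤ C') (G : C ⥤ C) (G'' : C'' ⥤ C''),
      G'.IsEquivalence ∧ G.IsEquivalence ∧ G''.IsEquivalence ∧
      IsTriangleFunctor G' ∧ IsTriangleFunctor G ∧ IsTriangleFunctor G'' ∧
      (∀ n : ℤ, Nonempty (p (n + r * t) ⋙ G' ≅ G ⋙ p n) ∧
        Nonempty (a (n + r * t) ⋙ G ≅ G' ⋙ a n) ∧
        Nonempty (b (n + r * t) ⋙ G ≅ G'' ⋙ b n) ∧
        Nonempty (q (n + r * t) ⋙ G'' ≅ G ⋙ q n)) := by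
    intro r
    induction r using Int.induction_on with
    | zero =>
      refine ⟨𝟭 C', 𝟭 C, 𝟭 C'', inferInstance, inferInstance, inferInstance,
        aux_tf_id, aux_tf_id, aux_tf_id, ?_⟩
      intro n
      simp only [zero_mul, add_zero]
      exact ⟨⟨(p n).rightUnitor ≪≫ (p n).leftUnitor.symm⟩,
        ⟨(a n).rightUnitor ≪≫ (a n).leftUnitor.symm⟩,
        ⟨(b n).rightUnitor ≪≫ (b n).leftUnitor.symm⟩,
        ⟨(q n).rightUnitor ≪≫ (q n).leftUnitor.symm⟩⟩
    | succ k ih =>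
      obtain ⟨G', G, G'', hG'e, hGe, hG''e, hG't, hGt, hG''t, hfam⟩ := ih
      haveI := hG'e; haveI := hGe; haveI := hG''e
      refine ⟨F' ⋙ G', F ⋙ G, F'' ⋙ G'', inferInstance, inferInstance, inferInstance,
        aux_tf_comp hT' hG't, aux_tf_comp hT hGt, aux_tf_comp hT'' hG''t, ?_⟩
      intro n
      obtain ⟨⟨eP⟩, ⟨eA⟩, ⟨eB⟩, ⟨eQ⟩⟩ := hfam n
      have kk := key (n + (k : ℤ) * t)
      have kP := kk.1.some
      have kA := (stepPA _ kk.1).some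
      have kB := (stepQB _ kk.2).some
      have kQ := kk.2.some
      rw [show n + ((k : ℤ) + 1) * t = (n + (k : ℤ) * t) + t by ring]
      exact ⟨⟨Functor.isoWhiskerRight kP G' ≪≫ Functor.isoWhiskerLeft F eP⟩,
        ⟨Functor.isoWhiskerRight kA G ≪≫ Functor.isoWhiskerLeft F' eA⟩,
        ⟨Functor.isoWhiskerRight kB G ≪≫ Functor.isoWhiskerLeft F'' eB⟩,
        ⟨Functor.isoWhiskerRight kQ G'' ≪≫ Functor.isoWhiskerLeft F eQ⟩⟩
    | pred k ih =>
      obtain ⟨G', G, G'', hG'e, hGe, hG''e, hG't, hGt, hG''t, hfam⟩ := ih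
      haveI := hG'e; haveI := hGe; haveI := hG''e
      refine ⟨F'.inv ⋙ G', F.inv ⋙ G, F''.inv ⋙ G'', inferInstance, inferInstance,
        inferInstance, aux_tf_comp (aux_tf_inv hT') hG't, aux_tf_comp (aux_tf_inv hT) hGt,
        aux_tf_comp (aux_tf_inv hT'') hG''t, ?_⟩
      intro n
      obtain ⟨⟨eP⟩, ⟨eA⟩, ⟨eB⟩, ⟨eQ⟩⟩ := hfam n
      have kk := key (n + (-(k : ℤ) - 1) * t)
      have kP := kk.1.some
      have kA := (stepPA _ kk.1).some
      have kB := (stepQB _ kk.2).some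
      have kQ := kk.2.some
      rw [show (n + (-(k : ℤ) - 1) * t) + t = n + -(k : ℤ) * t by ring] at kP kA kB kQ
      have fP := (aux_flip_iso F F' (p (n + -(k : ℤ) * t)) (p (n + (-(k : ℤ) - 1) * t)) kP).some
      have fA := (aux_flip_iso F' F (a (n + -(k : ℤ) * t)) (a (n + (-(k : ℤ) - 1) * t)) kA).some
      have fB := (aux_flip_iso F'' F (b (n + -(k : ℤ) * t)) (b (n + (-(k : ℤ) - 1) * t)) kB).some
      have fQ := (aux_flip_iso F F'' (q (n + -(k : ℤ) * t)) (q (n + (-(k : ℤ) - 1) * t)) kQ).some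
      exact ⟨⟨Functor.isoWhiskerRight fP G' ≪≫ Functor.isoWhiskerLeft F.inv eP⟩,
        ⟨Functor.isoWhiskerRight fA G ≪≫ Functor.isoWhiskerLeft F'.inv eA⟩,
        ⟨Functor.isoWhiskerRight fB G ≪≫ Functor.isoWhiskerLeft F''.inv eB⟩,
        ⟨Functor.isoWhiskerRight fQ G'' ≪≫ Functor.isoWhiskerLeft F.inv eQ⟩⟩
  -- conclude
  obtain ⟨G', G, G'', hG'e, hGe, hG''e, hG't, hGt, hG''t, hfam⟩ := iter r
  have h0 := hfam l
  have h1 := hfam (l + 1)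
  rw [show l + r * t = r * t + l by ring] at h0
  rw [show (l + 1) + r * t = r * t + l + 1 by ring] at h1
  obtain ⟨hP0, hA0, hB0, hQ0⟩ := h0
  obtain ⟨hP1, hA1, hB1, hQ1⟩ := h1
  exact ⟨G', G, G'',
    ⟨hG'e, hGe, hG''e, hG't, hGt, hG''t, hP0, hA0, hB0, hQ0⟩,
    ⟨hG''e, hGe, hG'e, hG''t, hGt, hG't, hQ0, hB1, hA0, hP1⟩,
    ⟨hG'e, hGe, hG''e, hG't, hGt, hG''t, hP0, hA0, hP1, hB0, hQ0, hB1⟩,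
    ⟨hG''e, hGe, hG'e, hG''t, hGt, hG't, hQ0, hB1, hQ1, hA0, hP1, hA1⟩⟩

end Statement
end
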